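/- arXiv:1806.08048 — 3 statements merged into one kernel-verified Lean document; each statement's English description precedes it below -/
import Mathlib

section
/- Let n ≥ 1, let Ω ⊂ ℝⁿ be a nonempty bounded open set, let s ∈ (0,1), ε ∈ (0, s/2) and K ≥ 0. Suppose g : Ω → ℝⁿ is measurable and satisfies (i) ‖g(x)‖ ≤ K δ(x)^{s−1} for all x ∈ Ω, and (ii) ‖g(x) − g(y)‖ ≤ K ‖x − y‖^s / δ(x,y) for all x, y ∈ Ω, and suppose A := ∫_Ω δ(x)^{2ε−1} dx < ∞. Then there exists a constant C depending only on n such that ∬_{Ω×Ω} ‖g(x) − g(y)‖² δ(x,y)^{1−2ε} ‖x − y‖^{−(n+2s−4ε)} dx dy ≤ C · K² · A · (1/ε + 1/(s − 2ε)). -/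
open MeasureTheory Metric Set
open scoped ENNReal

private lemma L0 {p : ℝ} (hp : 0 < p) (hp2 : p ≤ 2) : p / 6 ≤ 1 - (2:ℝ) ^ (-p) := by
  have ha : (0.6931471803 : ℝ) < Real.log 2 := Real.log_two_gt_d9
  have h1 : Real.log 2 * p + 1 ≤ (2:ℝ) ^ p := by
    rw [Real.rpow_def_of_pos (by norm_num : (0:ℝ) < 2)]
    exact Real.add_one_le_exp _
  have h2 : (0:ℝ) < 1 + p * Real.log 2 := by nlinarith
  have h3 : (2:ℝ) ^ (-p) = ((2:ℝ) ^ p)⁻¹ := by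
    rw [Real.rpow_neg (by norm_num)]
  have h4 : ((2:ℝ) ^ p)⁻¹ ≤ (1 + p * Real.log 2)⁻¹ := by
    apply inv_anti₀ h2; nlinarith
  have h5 : (1 + p * Real.log 2)⁻¹ ≤ 1 - p / 6 := by
    rw [inv_le_iff_one_le_mul₀ h2]
    nlinarith [mul_nonneg (sub_nonneg.2 hp2) (mul_pos hp (by linarith : (0:ℝ) < Real.log 2)).le]
  rw [h3]; linarith

private lemma geo_sum {c ρ : ℝ} (hc : 0 ≤ c) (hρ0 : 0 < ρ) (hρ2 : ρ ≤ 2) :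
    ∑' k : ℕ, ENNReal.ofReal (c * ((2:ℝ) ^ (-ρ)) ^ k) ≤ ENNReal.ofReal (c * (6 / ρ)) := by
  have hr0 : (0:ℝ) ≤ (2:ℝ) ^ (-ρ) := Real.rpow_nonneg (by norm_num) _
  have hr1 : (2:ℝ) ^ (-ρ) < 1 := by
    calc (2:ℝ) ^ (-ρ) < (2:ℝ) ^ (0:ℝ) :=
          Real.rpow_lt_rpow_of_exponent_lt (by norm_num) (by linarith)
      _ = 1 := Real.rpow_zero 2
  have hterm : ∀ k : ℕ, ENNReal.ofReal (c * ((2:ℝ) ^ (-ρ)) ^ k)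
      = ENNReal.ofReal c * (ENNReal.ofReal ((2:ℝ) ^ (-ρ))) ^ k := fun k => by
    rw [ENNReal.ofReal_mul hc, ENNReal.ofReal_pow hr0]
  rw [tsum_congr hterm, ENNReal.tsum_mul_left, ENNReal.tsum_geometric]
  have hsub : (1 : ENNReal) - ENNReal.ofReal ((2:ℝ) ^ (-ρ))
      = ENNReal.ofReal (1 - (2:ℝ) ^ (-ρ)) := by
    rw [ENNReal.ofReal_sub _ hr0, ENNReal.ofReal_one]
  rw [hsub, ← ENNReal.ofReal_inv_of_pos (by linarith), ← ENNReal.ofReal_mul hc]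
  apply ENNReal.ofReal_le_ofReal
  apply mul_le_mul_of_nonneg_left _ hc
  rw [inv_le_iff_one_le_mul₀ (by linarith)]
  have := L0 hρ0 hρ2
  rw [div_mul_eq_mul_div, le_div_iff₀ hρ0]
  nlinarith

private lemma nontrivial_euclidean {n : ℕ} (hn : 1 ≤ n) :
    Nontrivial (EuclideanSpace ℝ (Fin n)) := by
  haveI : Nonempty (Fin n) := ⟨⟨0, hn⟩⟩
  exact inferInstance

private lemma two_rpow_pos {a : ℝ} : (0:ℝ) < (2:ℝ) ^ a := Real.rpow_pos_of_pos (by norm_num) a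

/-- Tail bound: integral of `‖x-y‖^(-(n+p))` over `{y | R ≤ dist y x}`. -/
private lemma tail_bound {n : ℕ} (hn : 1 ≤ n) (x : EuclideanSpace ℝ (Fin n)) {R p : ℝ}
    (hR : 0 < R) (hp : 0 < p) (hp2 : p ≤ 2) :
    ∫⁻ y in {y | R ≤ dist y x}, ENNReal.ofReal (‖x - y‖ ^ (-((n:ℝ) + p))) ∂volume
      ≤ ENNReal.ofReal ((volume (ball (0 : EuclideanSpace ℝ (Fin n)) 1)).toReal
          * 2 ^ (n:ℝ) * R ^ (-p) * (6 / p)) := by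
  haveI := nontrivial_euclidean hn
  set ω : ℝ := (volume (ball (0 : EuclideanSpace ℝ (Fin n)) 1)).toReal with hω
  have hω0 : 0 ≤ ω := ENNReal.toReal_nonneg
  have hωE : volume (ball (0 : EuclideanSpace ℝ (Fin n)) 1) = ENNReal.ofReal ω := by
    rw [hω, ENNReal.ofReal_toReal measure_ball_lt_top.ne]
  set A : ℕ → Set (EuclideanSpace ℝ (Fin n)) := fun k =>
    {y | R * 2 ^ (k:ℝ) ≤ dist y x ∧ dist y x < R * 2 ^ ((k:ℝ) + 1)} with hA
  have hsub : {y | R ≤ dist y x} ⊆ ⋃ k, A k := by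
    intro y hy
    simp only [mem_setOf_eq] at hy
    have hex : ∃ k : ℕ, dist y x < R * 2 ^ ((k:ℝ) + 1) := by
      obtain ⟨k, hk⟩ := pow_unbounded_of_one_lt (dist y x / R) (by norm_num : (1:ℝ) < 2)
      refine ⟨k, ?_⟩
      have h1 : dist y x < R * 2 ^ (k:ℕ) := by
        rw [div_lt_iff₀ hR] at hk; linarith [hk]
      have h2 : (R:ℝ) * 2 ^ (k:ℕ) ≤ R * 2 ^ ((k:ℝ) + 1) := by
        rw [← Real.rpow_natCast 2 k]
        have : (2:ℝ) ^ (k:ℝ) ≤ 2 ^ ((k:ℝ) + 1) :=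
          Real.rpow_le_rpow_of_exponent_le (by norm_num) (by linarith)
        nlinarith [two_rpow_pos (a := (k:ℝ))]
      linarith
    refine mem_iUnion.2 ⟨Nat.find hex, ?_, Nat.find_spec hex⟩
    rcases Nat.eq_zero_or_pos (Nat.find hex) with h0 | hpos
    · rw [h0]; simpa using hy
    · have hmin := Nat.find_min hex (Nat.sub_lt hpos one_pos)
      push_neg at hmin
      have : ((Nat.find hex - 1 : ℕ) : ℝ) + 1 = (Nat.find hex : ℝ) := by
        have := Nat.succ_pred_eq_of_pos hpos
        exact_mod_cast congrArg (Nat.cast (R := ℝ)) this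
      rwa [this] at hmin
  have hAball : ∀ k, A k ⊆ ball x (R * 2 ^ ((k:ℝ) + 1)) := fun k y hy => by
    rw [mem_ball]; exact hy.2
  calc ∫⁻ y in {y | R ≤ dist y x}, ENNReal.ofReal (‖x - y‖ ^ (-((n:ℝ) + p))) ∂volume
      ≤ ∫⁻ y in ⋃ k, A k, ENNReal.ofReal (‖x - y‖ ^ (-((n:ℝ) + p))) ∂volume :=
        lintegral_mono_set hsub
    _ ≤ ∑' k, ∫⁻ y in A k, ENNReal.ofReal (‖x - y‖ ^ (-((n:ℝ) + p))) ∂volume :=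
        lintegral_iUnion_le _ _
    _ ≤ ∑' k : ℕ, ENNReal.ofReal ((ω * 2 ^ (n:ℝ) * R ^ (-p)) * ((2:ℝ) ^ (-p)) ^ k) := by
        refine ENNReal.tsum_le_tsum fun k => ?_
        have hpos : (0:ℝ) < R * 2 ^ (k:ℝ) := mul_pos hR two_rpow_pos
        have hbd : ∀ y ∈ A k, ENNReal.ofReal (‖x - y‖ ^ (-((n:ℝ) + p)))
            ≤ ENNReal.ofReal ((R * 2 ^ (k:ℝ)) ^ (-((n:ℝ) + p))) := by
          intro y hy
          apply ENNReal.ofReal_le_ofReal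
          have hxy : ‖x - y‖ = dist y x := by rw [dist_eq_norm, norm_sub_rev]
          rw [hxy]
          exact Real.rpow_le_rpow_of_nonpos hpos hy.1
            (by nlinarith [(Nat.cast_nonneg n : (0:ℝ) ≤ n)])
        calc ∫⁻ y in A k, ENNReal.ofReal (‖x - y‖ ^ (-((n:ℝ) + p))) ∂volume
            ≤ ∫⁻ _ in A k, ENNReal.ofReal ((R * 2 ^ (k:ℝ)) ^ (-((n:ℝ) + p))) ∂volume :=
              setLIntegral_mono measurable_const hbd
          _ = ENNReal.ofReal ((R * 2 ^ (k:ℝ)) ^ (-((n:ℝ) + p))) * volume (A k) :=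
              setLIntegral_const _ _
          _ ≤ ENNReal.ofReal ((R * 2 ^ (k:ℝ)) ^ (-((n:ℝ) + p)))
              * (ENNReal.ofReal ((R * 2 ^ ((k:ℝ) + 1)) ^ (n:ℕ)) * ENNReal.ofReal ω) := by
              gcongr
              rw [← hωE]
              refine le_trans (measure_mono (hAball k)) (le_of_eq ?_)
              rw [Measure.addHaar_ball volume x (by positivity),
                finrank_euclideanSpace_fin]
          _ = ENNReal.ofReal ((R * 2 ^ (k:ℝ)) ^ (-((n:ℝ) + p))
                * ((R * 2 ^ ((k:ℝ) + 1)) ^ (n:ℕ) * ω)) := by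
              rw [ENNReal.ofReal_mul (by positivity), ENNReal.ofReal_mul (by positivity)]
          _ = ENNReal.ofReal ((ω * 2 ^ (n:ℝ) * R ^ (-p)) * ((2:ℝ) ^ (-p)) ^ k) := by
              congr 1
              have h2 : ∀ a b : ℝ, ((2:ℝ) ^ a) ^ b = 2 ^ (a * b) := fun a b =>
                (Real.rpow_mul (by norm_num) a b).symm
              have hR2 : ∀ a b : ℝ, R ^ a * R ^ b = R ^ (a + b) := fun a b =>
                (Real.rpow_add hR a b).symm
              have h22 : ∀ a b : ℝ, (2:ℝ) ^ a * 2 ^ b = 2 ^ (a + b) := fun a b =>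
                (Real.rpow_add (by norm_num) a b).symm
              rw [← Real.rpow_natCast (R * 2 ^ ((k:ℝ) + 1)) n,
                  ← Real.rpow_natCast ((2:ℝ) ^ (-p)) k,
                  Real.mul_rpow hR.le two_rpow_pos.le,
                  Real.mul_rpow hR.le two_rpow_pos.le, h2, h2, h2]
              rw [show R ^ (-((n:ℝ) + p)) * (2:ℝ) ^ ((k:ℝ) * -((n:ℝ) + p))
                    * (R ^ ((n:ℕ):ℝ) * 2 ^ (((k:ℝ) + 1) * ((n:ℕ):ℝ)) * ω)
                  = (R ^ (-((n:ℝ) + p)) * R ^ ((n:ℕ):ℝ))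
                    * ((2:ℝ) ^ ((k:ℝ) * -((n:ℝ) + p)) * 2 ^ (((k:ℝ) + 1) * ((n:ℕ):ℝ))) * ω
                  from by ring, hR2, h22]
              rw [show ω * (2:ℝ) ^ ((n:ℕ):ℝ) * R ^ (-p) * (2:ℝ) ^ (-p * (k:ℝ))
                  = R ^ (-p) * ((2:ℝ) ^ ((n:ℕ):ℝ) * 2 ^ (-p * (k:ℝ))) * ω from by ring, h22]
              rw [show -((n:ℝ) + p) + ((n:ℕ):ℝ) = -p from by push_cast; ring,
                  show (k:ℝ) * -((n:ℝ) + p) + ((k:ℝ) + 1) * ((n:ℕ):ℝ)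
                    = ((n:ℕ):ℝ) + -p * (k:ℝ) from by push_cast; ring]
    _ ≤ ENNReal.ofReal ((ω * 2 ^ (n:ℝ) * R ^ (-p)) * (6 / p)) := geo_sum (by positivity) hp hp2

/-- Ball bound: integral of `‖x-y‖^(q-n)` over `ball x R`. -/
private lemma ball_bound {n : ℕ} (hn : 1 ≤ n) (x : EuclideanSpace ℝ (Fin n)) {R q : ℝ}
    (hR : 0 < R) (hq : 0 < q) (hq2 : q ≤ 2) :
    ∫⁻ y in ball x R, ENNReal.ofReal (‖x - y‖ ^ (q - (n:ℝ))) ∂volume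
      ≤ ENNReal.ofReal ((volume (ball (0 : EuclideanSpace ℝ (Fin n)) 1)).toReal
          * 2 ^ (n:ℝ) * R ^ q * (6 / q)) := by
  haveI := nontrivial_euclidean hn
  set ω : ℝ := (volume (ball (0 : EuclideanSpace ℝ (Fin n)) 1)).toReal with hω
  have hω0 : 0 ≤ ω := ENNReal.toReal_nonneg
  have hωE : volume (ball (0 : EuclideanSpace ℝ (Fin n)) 1) = ENNReal.ofReal ω := by
    rw [hω, ENNReal.ofReal_toReal measure_ball_lt_top.ne]
  set A : ℕ → Set (EuclideanSpace ℝ (Fin n)) := fun k =>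
    {y | R * 2 ^ (-(k:ℝ) - 1) ≤ dist y x ∧ dist y x < R * 2 ^ (-(k:ℝ))} with hA
  have hsub : ball x R ⊆ {x} ∪ ⋃ k, A k := by
    intro y hy
    rcases eq_or_ne y x with rfl | hne
    · exact Or.inl rfl
    have ht : 0 < dist y x := dist_pos.2 hne
    have hex : ∃ k : ℕ, R * 2 ^ (-(k:ℝ) - 1) ≤ dist y x := by
      obtain ⟨k, hk⟩ := pow_unbounded_of_one_lt (R / dist y x) (by norm_num : (1:ℝ) < 2)
      refine ⟨k, ?_⟩
      have h1 : R < dist y x * 2 ^ (k:ℕ) := by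
        rw [div_lt_iff₀ ht] at hk; linarith
      have h2 : (2:ℝ) ^ (-(k:ℝ) - 1) ≤ ((2:ℝ) ^ (k:ℕ))⁻¹ := by
        rw [← Real.rpow_natCast 2 k, ← Real.rpow_neg (by norm_num : (0:ℝ) ≤ 2)]
        exact Real.rpow_le_rpow_of_exponent_le (by norm_num) (by linarith)
      have h3 : R * ((2:ℝ) ^ (k:ℕ))⁻¹ ≤ dist y x := by
        rw [mul_inv_le_iff₀ (by positivity)]; linarith
      calc R * 2 ^ (-(k:ℝ) - 1) ≤ R * ((2:ℝ) ^ (k:ℕ))⁻¹ := by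
            apply mul_le_mul_of_nonneg_left h2 hR.le
        _ ≤ dist y x := h3
    refine Or.inr (mem_iUnion.2 ⟨Nat.find hex, Nat.find_spec hex, ?_⟩)
    rcases Nat.eq_zero_or_pos (Nat.find hex) with h0 | hpos
    · rw [h0]
      simpa using hy
    · have hmin := Nat.find_min hex (Nat.sub_lt hpos one_pos)
      push_neg at hmin
      have hc : -((Nat.find hex - 1 : ℕ) : ℝ) - 1 = -(Nat.find hex : ℝ) := by
        rw [Nat.cast_pred hpos]; ring
      rwa [hc] at hmin
  have hAball : ∀ k, A k ⊆ ball x (R * 2 ^ (-(k:ℝ))) := fun k y hy => by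
    rw [mem_ball]; exact hy.2
  calc ∫⁻ y in ball x R, ENNReal.ofReal (‖x - y‖ ^ (q - (n:ℝ))) ∂volume
      ≤ ∫⁻ y in {x} ∪ ⋃ k, A k, ENNReal.ofReal (‖x - y‖ ^ (q - (n:ℝ))) ∂volume :=
        lintegral_mono_set hsub
    _ ≤ (∫⁻ y in {x}, ENNReal.ofReal (‖x - y‖ ^ (q - (n:ℝ))) ∂volume)
        + ∫⁻ y in ⋃ k, A k, ENNReal.ofReal (‖x - y‖ ^ (q - (n:ℝ))) ∂volume :=
        lintegral_union_le _ _ _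
    _ = ∫⁻ y in ⋃ k, A k, ENNReal.ofReal (‖x - y‖ ^ (q - (n:ℝ))) ∂volume := by
        rw [setLIntegral_measure_zero _ _ (measure_singleton x), zero_add]
    _ ≤ ∑' k, ∫⁻ y in A k, ENNReal.ofReal (‖x - y‖ ^ (q - (n:ℝ))) ∂volume :=
        lintegral_iUnion_le _ _
    _ ≤ ∑' k : ℕ, ENNReal.ofReal ((ω * 2 ^ (n:ℝ) * R ^ q) * ((2:ℝ) ^ (-q)) ^ k) := by
        refine ENNReal.tsum_le_tsum fun k => ?_
        have hlow : (0:ℝ) < R * 2 ^ (-(k:ℝ) - 1) := mul_pos hR two_rpow_pos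
        set B : ℝ := (R * 2 ^ (-(k:ℝ))) ^ q * (R * 2 ^ (-(k:ℝ) - 1)) ^ (-((n:ℕ):ℝ)) with hB
        have hB0 : 0 ≤ B := by rw [hB]; positivity
        have hbd : ∀ y ∈ A k, ENNReal.ofReal (‖x - y‖ ^ (q - (n:ℝ)))
            ≤ ENNReal.ofReal B := by
          intro y hy
          apply ENNReal.ofReal_le_ofReal
          have ht : 0 < dist y x := lt_of_lt_of_le hlow hy.1
          have hxy : ‖x - y‖ = dist y x := by rw [dist_eq_norm, norm_sub_rev]
          have hsplit : dist y x ^ (q - (n:ℝ)) = dist y x ^ q * dist y x ^ (-((n:ℕ):ℝ)) := by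
            rw [← Real.rpow_add ht]; ring_nf
          rw [hxy, hsplit, hB]
          apply mul_le_mul
          · exact Real.rpow_le_rpow (le_of_lt ht) hy.2.le hq.le
          · exact Real.rpow_le_rpow_of_nonpos hlow hy.1
              (by nlinarith [(Nat.cast_nonneg n : (0:ℝ) ≤ n)])
          · positivity
          · positivity
        calc ∫⁻ y in A k, ENNReal.ofReal (‖x - y‖ ^ (q - (n:ℝ))) ∂volume
            ≤ ∫⁻ _ in A k, ENNReal.ofReal B ∂volume := setLIntegral_mono measurable_const hbd
          _ = ENNReal.ofReal B * volume (A k) := setLIntegral_const _ _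
          _ ≤ ENNReal.ofReal B
              * (ENNReal.ofReal ((R * 2 ^ (-(k:ℝ))) ^ (n:ℕ)) * ENNReal.ofReal ω) := by
              gcongr
              rw [← hωE]
              refine le_trans (measure_mono (hAball k)) (le_of_eq ?_)
              rw [Measure.addHaar_ball volume x (by positivity),
                finrank_euclideanSpace_fin]
          _ = ENNReal.ofReal (B * ((R * 2 ^ (-(k:ℝ))) ^ (n:ℕ) * ω)) := by
              rw [ENNReal.ofReal_mul hB0,
                ENNReal.ofReal_mul (by positivity), ENNReal.ofReal_mul (by positivity)]
          _ = ENNReal.ofReal ((ω * 2 ^ (n:ℝ) * R ^ q) * ((2:ℝ) ^ (-q)) ^ k) := by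
              congr 1
              have h2 : ∀ a b : ℝ, ((2:ℝ) ^ a) ^ b = 2 ^ (a * b) := fun a b =>
                (Real.rpow_mul (by norm_num) a b).symm
              have hR2 : ∀ a b : ℝ, R ^ a * R ^ b = R ^ (a + b) := fun a b =>
                (Real.rpow_add hR a b).symm
              have h22 : ∀ a b : ℝ, (2:ℝ) ^ a * 2 ^ b = 2 ^ (a + b) := fun a b =>
                (Real.rpow_add (by norm_num) a b).symm
              rw [hB, ← Real.rpow_natCast (R * 2 ^ (-(k:ℝ))) n,
                  ← Real.rpow_natCast ((2:ℝ) ^ (-q)) k,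
                  Real.mul_rpow hR.le two_rpow_pos.le,
                  Real.mul_rpow hR.le two_rpow_pos.le,
                  Real.mul_rpow hR.le two_rpow_pos.le, h2, h2, h2, h2]
              rw [show R ^ q * (2:ℝ) ^ (-(k:ℝ) * q)
                    * (R ^ (-((n:ℕ):ℝ)) * 2 ^ ((-(k:ℝ) - 1) * -((n:ℕ):ℝ)))
                    * (R ^ ((n:ℕ):ℝ) * 2 ^ (-(k:ℝ) * ((n:ℕ):ℝ)) * ω)
                  = (R ^ q * (R ^ (-((n:ℕ):ℝ)) * R ^ ((n:ℕ):ℝ)))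
                    * ((2:ℝ) ^ (-(k:ℝ) * q)
                      * ((2:ℝ) ^ ((-(k:ℝ) - 1) * -((n:ℕ):ℝ)) * 2 ^ (-(k:ℝ) * ((n:ℕ):ℝ)))) * ω
                  from by ring, hR2, h22, hR2, h22]
              rw [show ω * (2:ℝ) ^ ((n:ℕ):ℝ) * R ^ q * (2:ℝ) ^ (-q * (k:ℝ))
                  = R ^ (q + (-((n:ℕ):ℝ) + ((n:ℕ):ℝ)))
                    * ((2:ℝ) ^ ((n:ℕ):ℝ) * 2 ^ (-q * (k:ℝ))) * ω from by
                    rw [show q + (-((n:ℕ):ℝ) + ((n:ℕ):ℝ)) = q from by ring]; ring,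
                h22]
              rw [show -(k:ℝ) * q + ((-(k:ℝ) - 1) * -((n:ℕ):ℝ) + -(k:ℝ) * ((n:ℕ):ℝ))
                    = ((n:ℕ):ℝ) + -q * (k:ℝ) from by ring]
    _ ≤ ENNReal.ofReal ((ω * 2 ^ (n:ℝ) * R ^ q) * (6 / q)) := geo_sum (by positivity) hq hq2

set_option maxHeartbeats 1000000

private lemma rpow_aux {x : ℝ} (hx : 0 < x) (a b : ℝ) : x ^ a * x ^ b = x ^ (a + b) :=
  (Real.rpow_add hx a b).symm

/-- **Interior weighted Gagliardo seminorm estimate (proof of Theorem 2.4).**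
For `n ≥ 1` there is `C = C(n) > 0` such that for every nonempty bounded open `Ω ⊂ ℝⁿ`,
`s ∈ (0,1)`, `ε ∈ (0, s/2)`, `K ≥ 0` and measurable `g : Ω → ℝⁿ` with
`‖g(x)‖ ≤ K δ(x)^{s−1}` and `‖g(x) − g(y)‖ ≤ K ‖x−y‖^s / δ(x,y)` on `Ω`, and
`A = ∫_Ω δ(x)^{2ε−1} dx < ∞`, one has
`∬_{Ω×Ω} ‖g(x)−g(y)‖² δ(x,y)^{1−2ε} ‖x−y‖^{−(n+2s−4ε)} dx dy ≤ C K² A (1/ε + 1/(s−2ε))`,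
where `δ(z) = dist(z, ∂Ω)` and `δ(x,y) = min(δ(x), δ(y))`. -/
theorem stmt3 (n : ℕ) (hn : 1 ≤ n) :
    ∃ C : ℝ, 0 < C ∧
      ∀ (Ω : Set (EuclideanSpace ℝ (Fin n))), IsOpen Ω → Bornology.IsBounded Ω → Ω.Nonempty →
      ∀ (s ε K : ℝ), s ∈ Set.Ioo (0:ℝ) 1 → ε ∈ Set.Ioo 0 (s / 2) → 0 ≤ K →
      ∀ (g : EuclideanSpace ℝ (Fin n) → EuclideanSpace ℝ (Fin n)), Measurable g →
      (∀ x ∈ Ω, ‖g x‖ ≤ K * Metric.infDist x (frontier Ω) ^ (s - 1)) →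
      (∀ x ∈ Ω, ∀ y ∈ Ω, ‖g x - g y‖ ≤
        K * ‖x - y‖ ^ s / min (Metric.infDist x (frontier Ω)) (Metric.infDist y (frontier Ω))) →
      MeasureTheory.IntegrableOn
        (fun x => Metric.infDist x (frontier Ω) ^ (2 * ε - 1)) Ω volume →
      (∫⁻ x in Ω, ∫⁻ y in Ω, ENNReal.ofReal (‖g x - g y‖ ^ 2 *
          (min (Metric.infDist x (frontier Ω)) (Metric.infDist y (frontier Ω))) ^ (1 - 2 * ε) *
          ‖x - y‖ ^ (-((n : ℝ) + 2 * s - 4 * ε)))) ≤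
      ENNReal.ofReal (C * K ^ 2 *
        (∫ x in Ω, Metric.infDist x (frontier Ω) ^ (2 * ε - 1)) * (1 / ε + 1 / (s - 2 * ε))) := by
  classical
  haveI := nontrivial_euclidean hn
  set ω : ℝ := (volume (ball (0 : EuclideanSpace ℝ (Fin n)) 1)).toReal with hω
  have hω0 : 0 ≤ ω := ENNReal.toReal_nonneg
  set cb : ℝ := ω * 2 ^ (n:ℝ) with hcb
  have hcb0 : 0 ≤ cb := by positivity
  refine ⟨60 * cb + 1, by positivity, ?_⟩
  intro Ω hΩo hΩb hΩne s ε K hs hε hK g hg hgbd hghold hInt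
  obtain ⟨hs0, hs1⟩ := hs
  obtain ⟨hε0, hεs⟩ := hε
  have hse : 0 < s - 2 * ε := by linarith
  have hp0 : 0 < 2 * s - 4 * ε := by linarith
  have hp2 : 2 * s - 4 * ε ≤ 2 := by linarith
  have hq0 : 0 < 4 * ε := by linarith
  have hq2 : 4 * ε ≤ 2 := by linarith
  set δ : EuclideanSpace ℝ (Fin n) → ℝ := fun z => Metric.infDist z (frontier Ω) with hδ
  have hδm : Measurable δ := (continuous_infDist_pt _).measurable
  have hδnn : ∀ z, 0 ≤ δ z := fun z => Metric.infDist_nonneg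
  -- frontier is nonempty
  have hfr : (frontier Ω).Nonempty := by
    by_contra hemp
    rw [not_nonempty_iff_eq_empty] at hemp
    have hcl : IsClosed Ω := by
      have h1 : closure Ω = Ω := by
        have := closure_eq_interior_union_frontier Ω
        rw [hemp, hΩo.interior_eq, union_empty] at this
        exact this
      exact isClosed_of_closure_subset h1.le
    have : Ω = univ := by
      rcases isClopen_iff.1 ⟨hcl, hΩo⟩ with h | h
      · exact absurd h hΩne.ne_empty
      · exact h
    rw [this] at hΩb
    exact NormedSpace.unbounded_univ ℝ (EuclideanSpace ℝ (Fin n)) hΩb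
  have hδpos : ∀ x ∈ Ω, 0 < δ x := by
    intro x hx
    rw [hδ]
    refine (IsClosed.notMem_iff_infDist_pos isClosed_frontier hfr).1 ?_
    intro hmem
    exact (disjoint_frontier_iff_isOpen.2 hΩo).le_bot ⟨hmem, hx⟩
  have hLip : ∀ a b : EuclideanSpace ℝ (Fin n), δ a ≤ δ b + dist a b := fun a b =>
    Metric.infDist_le_infDist_add_dist
  -- the integrand
  set F : EuclideanSpace ℝ (Fin n) → EuclideanSpace ℝ (Fin n) → ℝ≥0∞ := fun x y =>
    ENNReal.ofReal (‖g x - g y‖ ^ 2 * min (δ x) (δ y) ^ (1 - 2 * ε) *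
      ‖x - y‖ ^ (-((n : ℝ) + 2 * s - 4 * ε))) with hF
  have hFm : Measurable (fun p : EuclideanSpace ℝ (Fin n) × EuclideanSpace ℝ (Fin n)
      => F p.1 p.2) := by
    apply ENNReal.measurable_ofReal.comp
    apply Measurable.mul
    apply Measurable.mul
    · exact (((hg.comp measurable_fst).sub (hg.comp measurable_snd)).norm).pow_const 2
    · exact ((hδm.comp measurable_fst).min (hδm.comp measurable_snd)).pow measurable_const
    · exact ((measurable_fst.sub measurable_snd).norm).pow measurable_const
  have hFsymm : ∀ x y, F x y = F y x := by
    intro x y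
    rw [hF]
    simp only [norm_sub_rev (g x), norm_sub_rev x, min_comm (δ x)]
  -- basic Hölder-type bounds
  have hgm : ∀ x ∈ Ω, ∀ y ∈ Ω, ‖g x - g y‖ ≤ 2 * K * min (δ x) (δ y) ^ (s - 1) := by
    intro x hx y hy
    have hm0 : 0 < min (δ x) (δ y) := lt_min (hδpos x hx) (hδpos y hy)
    have h1 : δ x ^ (s - 1) ≤ min (δ x) (δ y) ^ (s - 1) :=
      Real.rpow_le_rpow_of_nonpos hm0 (min_le_left _ _) (by linarith)
    have h2 : δ y ^ (s - 1) ≤ min (δ x) (δ y) ^ (s - 1) :=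
      Real.rpow_le_rpow_of_nonpos hm0 (min_le_right _ _) (by linarith)
    calc ‖g x - g y‖ ≤ ‖g x‖ + ‖g y‖ := norm_sub_le _ _
      _ ≤ K * δ x ^ (s - 1) + K * δ y ^ (s - 1) := add_le_add (hgbd x hx) (hgbd y hy)
      _ ≤ K * min (δ x) (δ y) ^ (s - 1) + K * min (δ x) (δ y) ^ (s - 1) := by
          gcongr
      _ = 2 * K * min (δ x) (δ y) ^ (s - 1) := by ring
  -- near pointwise bound
  have hnear : ∀ x ∈ Ω, ∀ y ∈ Ω, dist y x < δ x / 2 →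
      F x y ≤ ENNReal.ofReal (K ^ 2 * (δ x / 2) ^ (-(1 + 2 * ε)))
        * ENNReal.ofReal (‖x - y‖ ^ (4 * ε - (n:ℝ))) := by
    intro x hx y hy hdist
    have hd := hδpos x hx
    have hd2 : 0 < δ x / 2 := by linarith
    have hdy : δ x / 2 ≤ δ y := by
      have h' := hLip x y
      rw [dist_comm] at h'
      linarith
    have hm2 : δ x / 2 ≤ min (δ x) (δ y) := le_min (by linarith) hdy
    have hm0 : 0 < min (δ x) (δ y) := lt_of_lt_of_le hd2 hm2
    rcases eq_or_ne y x with rfl | hne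
    · have : F y y = 0 := by
        rw [hF]; simp
      rw [this]; exact zero_le
    · have htpos : 0 < ‖x - y‖ := by
        rw [norm_pos_iff]
        exact sub_ne_zero.2 (Ne.symm hne)
      rw [hF, ← ENNReal.ofReal_mul (by positivity)]
      apply ENNReal.ofReal_le_ofReal
      have h1 : ‖g x - g y‖ ≤ K * ‖x - y‖ ^ s / min (δ x) (δ y) := hghold x hx y hy
      have h2 : ‖g x - g y‖ ^ 2 ≤ (K * ‖x - y‖ ^ s / min (δ x) (δ y)) ^ 2 :=
        pow_le_pow_left₀ (norm_nonneg _) h1 2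
      have ht2 : (‖x - y‖ ^ s) ^ (2:ℕ) = ‖x - y‖ ^ (2 * s) := by
        rw [← Real.rpow_natCast (‖x - y‖ ^ s) 2, ← Real.rpow_mul htpos.le]
        congr 1; push_cast; ring
      have hminv : ((min (δ x) (δ y)) ^ (2:ℕ) : ℝ)⁻¹ = min (δ x) (δ y) ^ (-(2:ℝ)) := by
        rw [← Real.rpow_natCast (min (δ x) (δ y)) 2, ← Real.rpow_neg hm0.le]
        norm_num
      calc ‖g x - g y‖ ^ 2 * min (δ x) (δ y) ^ (1 - 2 * ε)
            * ‖x - y‖ ^ (-((n:ℝ) + 2 * s - 4 * ε))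
          ≤ (K * ‖x - y‖ ^ s / min (δ x) (δ y)) ^ 2 * min (δ x) (δ y) ^ (1 - 2 * ε)
            * ‖x - y‖ ^ (-((n:ℝ) + 2 * s - 4 * ε)) := by
            gcongr <;> positivity
        _ = K ^ 2 * (‖x - y‖ ^ (2 * s) * ‖x - y‖ ^ (-((n:ℝ) + 2 * s - 4 * ε)))
            * (min (δ x) (δ y) ^ (-(2:ℝ)) * min (δ x) (δ y) ^ (1 - 2 * ε)) := by
            rw [div_pow, mul_pow, div_eq_mul_inv, ht2, hminv]; ring
        _ = K ^ 2 * ‖x - y‖ ^ (4 * ε - (n:ℝ)) * min (δ x) (δ y) ^ (-(1 + 2 * ε)) := by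
            rw [rpow_aux htpos, rpow_aux hm0,
              show 2 * s + -((n:ℝ) + 2 * s - 4 * ε) = 4 * ε - (n:ℝ) from by ring,
              show -(2:ℝ) + (1 - 2 * ε) = -(1 + 2 * ε) from by ring]
        _ ≤ K ^ 2 * ‖x - y‖ ^ (4 * ε - (n:ℝ)) * (δ x / 2) ^ (-(1 + 2 * ε)) := by
            exact mul_le_mul_of_nonneg_left
              (Real.rpow_le_rpow_of_nonpos hd2 hm2 (by linarith)) (by positivity)
        _ = K ^ 2 * (δ x / 2) ^ (-(1 + 2 * ε)) * ‖x - y‖ ^ (4 * ε - (n:ℝ)) := by ring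
  -- far pointwise bound
  have hfar : ∀ x ∈ Ω, ∀ y ∈ Ω,
      F x y ≤ ENNReal.ofReal (4 * K ^ 2 * min (δ x) (δ y) ^ (2 * s - 2)
          * min (δ x) (δ y) ^ (1 - 2 * ε))
        * ENNReal.ofReal (‖x - y‖ ^ (-((n:ℝ) + (2 * s - 4 * ε)))) := by
    intro x hx y hy
    have hm0 : 0 < min (δ x) (δ y) := lt_min (hδpos x hx) (hδpos y hy)
    rw [hF, ← ENNReal.ofReal_mul (by positivity)]
    apply ENNReal.ofReal_le_ofReal
    rw [show -((n:ℝ) + 2 * s - 4 * ε) = -((n:ℝ) + (2 * s - 4 * ε)) from by ring]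
    have h1 : ‖g x - g y‖ ^ 2 ≤ 4 * K ^ 2 * min (δ x) (δ y) ^ (2 * s - 2) := by
      calc ‖g x - g y‖ ^ 2 ≤ (2 * K * min (δ x) (δ y) ^ (s - 1)) ^ 2 :=
            pow_le_pow_left₀ (norm_nonneg _) (hgm x hx y hy) 2
        _ = 4 * K ^ 2 * min (δ x) (δ y) ^ (2 * s - 2) := by
            rw [mul_pow, mul_pow, ← Real.rpow_natCast (min (δ x) (δ y) ^ (s - 1)) 2,
              ← Real.rpow_mul hm0.le,
              show (s - 1) * ((2:ℕ):ℝ) = 2 * s - 2 from by push_cast; ring]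
            norm_num
    gcongr <;> positivity
  -- regions
  set H : EuclideanSpace ℝ (Fin n) × EuclideanSpace ℝ (Fin n) → ℝ≥0∞ := fun p =>
    if p.1 ∈ Ω ∧ p.2 ∈ Ω then F p.1 p.2 else 0 with hH
  set H1 : EuclideanSpace ℝ (Fin n) × EuclideanSpace ℝ (Fin n) → ℝ≥0∞ := fun p =>
    if 2 * δ p.2 < δ p.1 then 0 else H p with hH1
  set H2 : EuclideanSpace ℝ (Fin n) × EuclideanSpace ℝ (Fin n) → ℝ≥0∞ := fun p =>
    if 2 * δ p.2 < δ p.1 then H p else 0 with hH2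
  have hΩmes : MeasurableSet Ω := hΩo.measurableSet
  have hHm : Measurable H := by
    apply Measurable.ite _ hFm measurable_const
    exact (measurable_fst hΩmes).inter (measurable_snd hΩmes)
  have hSm : MeasurableSet {p : EuclideanSpace ℝ (Fin n) × EuclideanSpace ℝ (Fin n) |
      2 * δ p.2 < δ p.1} :=
    measurableSet_lt ((hδm.comp measurable_snd).const_mul 2) (hδm.comp measurable_fst)
  have hH1m : Measurable H1 := Measurable.ite hSm measurable_const hHm
  have hH2m : Measurable H2 := Measurable.ite hSm hHm measurable_const
  have hsplit : ∀ p, H p = H1 p + H2 p := by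
    intro p
    rw [hH1, hH2]
    by_cases h : 2 * δ p.2 < δ p.1
    · simp [h]
    · simp [h]
  -- rewrite the LHS as a full-space double integral of H
  have hLHS : (∫⁻ x in Ω, ∫⁻ y in Ω, F x y) = ∫⁻ x, ∫⁻ y, H (x, y) := by
    rw [← lintegral_indicator hΩmes]
    congr 1
    ext x
    rw [indicator_apply]
    by_cases hx : x ∈ Ω
    · simp only [hx, if_pos]
      rw [← lintegral_indicator hΩmes]
      congr 1
      ext y
      rw [indicator_apply, hH]
      by_cases hy : y ∈ Ω <;> simp [hx, hy]
    · simp only [hx, if_neg, not_false_iff]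
      symm
      rw [← lintegral_zero]
      congr 1
      ext y
      rw [hH]
      simp [hx]
  -- the per-x bound function
  set W : EuclideanSpace ℝ (Fin n) → ℝ≥0∞ := fun x =>
    ENNReal.ofReal (cb * K ^ 2 * δ x ^ (2 * ε - 1) * (3 / ε + 48 / (s - 2 * ε))) with hW
  set W2 : EuclideanSpace ℝ (Fin n) → ℝ≥0∞ := fun x =>
    ENNReal.ofReal (cb * K ^ 2 * δ x ^ (2 * ε - 1) * (12 / (s - 2 * ε))) with hW2
  -- bound for the H1 part
  have hT1 : ∀ x, (∫⁻ y, H1 (x, y)) ≤ Ω.indicator W x := by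
    intro x
    by_cases hx : x ∈ Ω
    swap
    · have hz : ∀ y, H1 (x, y) = 0 := by
        intro y
        rw [hH1, hH]
        by_cases h : 2 * δ y < δ x <;> simp [h, hx]
      simp only [hz, lintegral_zero]
      exact zero_le
    have hd := hδpos x hx
    have hd2 : 0 < δ x / 2 := by linarith
    have hhalf : ∀ a : ℝ, (δ x / 2) ^ a = δ x ^ a * 2 ^ (-a) := by
      intro a
      rw [div_eq_mul_inv, Real.mul_rpow hd.le (by norm_num),
        Real.inv_rpow (by norm_num : (0:ℝ) ≤ 2), ← Real.rpow_neg (by norm_num : (0:ℝ) ≤ 2)]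
    have h2le : (2:ℝ) ^ (-(2 * ε - 1)) ≤ 2 := by
      calc (2:ℝ) ^ (-(2 * ε - 1)) ≤ 2 ^ (1:ℝ) :=
            Real.rpow_le_rpow_of_exponent_le one_le_two (by linarith)
        _ = 2 := Real.rpow_one 2
    have h4 : (2:ℝ) ^ (2:ℝ) = 4 := by
      have h := Real.rpow_natCast (2:ℝ) 2
      rw [Nat.cast_ofNat] at h
      rw [h]; norm_num
    have h4le : (2:ℝ) ^ (-(4 * ε - 2)) ≤ 4 := by
      calc (2:ℝ) ^ (-(4 * ε - 2)) ≤ 2 ^ (2:ℝ) :=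
            Real.rpow_le_rpow_of_exponent_le one_le_two (by linarith)
        _ = 4 := h4
    set a1 : ℝ := K ^ 2 * (δ x / 2) ^ (-(1 + 2 * ε)) with ha1
    set a2 : ℝ := 4 * K ^ 2 * (δ x / 2) ^ (2 * s - 2) * δ x ^ (1 - 2 * ε) with ha2
    have ha10 : 0 ≤ a1 := by rw [ha1]; positivity
    have ha20 : 0 ≤ a2 := by rw [ha2]; positivity
    have hterm1 : a1 * (ω * 2 ^ (n:ℝ) * (δ x / 2) ^ (4 * ε) * (6 / (4 * ε)))
        ≤ cb * K ^ 2 * δ x ^ (2 * ε - 1) * (3 / ε) := by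
      have e1 : (δ x / 2) ^ (-(1 + 2 * ε)) * (δ x / 2) ^ (4 * ε)
          = δ x ^ (2 * ε - 1) * 2 ^ (-(2 * ε - 1)) := by
        rw [rpow_aux hd2, show -(1 + 2 * ε) + 4 * ε = 2 * ε - 1 from by ring, hhalf]
      calc a1 * (ω * 2 ^ (n:ℝ) * (δ x / 2) ^ (4 * ε) * (6 / (4 * ε)))
          = (ω * 2 ^ (n:ℝ)) * K ^ 2
            * ((δ x / 2) ^ (-(1 + 2 * ε)) * (δ x / 2) ^ (4 * ε)) * (6 / (4 * ε)) := by
            rw [ha1]; ring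
        _ = (ω * 2 ^ (n:ℝ)) * K ^ 2 * δ x ^ (2 * ε - 1)
            * ((2:ℝ) ^ (-(2 * ε - 1)) * (6 / (4 * ε))) := by rw [e1]; ring
        _ ≤ (ω * 2 ^ (n:ℝ)) * K ^ 2 * δ x ^ (2 * ε - 1) * (2 * (6 / (4 * ε))) := by
            apply mul_le_mul_of_nonneg_left _ (by positivity)
            apply mul_le_mul_of_nonneg_right h2le (by positivity)
        _ = cb * K ^ 2 * δ x ^ (2 * ε - 1) * (3 / ε) := by
            rw [hcb, show (2:ℝ) * (6 / (4 * ε)) = 3 / ε from by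
              rw [show (2:ℝ) * (6 / (4 * ε)) = 12 / (4 * ε) from by ring,
                div_eq_div_iff (by linarith) (by linarith)]; ring]
    have hterm2 : a2 * (ω * 2 ^ (n:ℝ) * (δ x / 2) ^ (-(2 * s - 4 * ε)) * (6 / (2 * s - 4 * ε)))
        ≤ cb * K ^ 2 * δ x ^ (2 * ε - 1) * (48 / (s - 2 * ε)) := by
      have e2 : (δ x / 2) ^ (2 * s - 2) * (δ x / 2) ^ (-(2 * s - 4 * ε))
          = δ x ^ (4 * ε - 2) * 2 ^ (-(4 * ε - 2)) := by
        rw [rpow_aux hd2, show 2 * s - 2 + -(2 * s - 4 * ε) = 4 * ε - 2 from by ring, hhalf]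
      have e3 : δ x ^ (1 - 2 * ε) * δ x ^ (4 * ε - 2) = δ x ^ (2 * ε - 1) := by
        rw [rpow_aux hd, show 1 - 2 * ε + (4 * ε - 2) = 2 * ε - 1 from by ring]
      calc a2 * (ω * 2 ^ (n:ℝ) * (δ x / 2) ^ (-(2 * s - 4 * ε)) * (6 / (2 * s - 4 * ε)))
          = (ω * 2 ^ (n:ℝ)) * (4 * K ^ 2) * δ x ^ (1 - 2 * ε)
            * ((δ x / 2) ^ (2 * s - 2) * (δ x / 2) ^ (-(2 * s - 4 * ε)))
            * (6 / (2 * s - 4 * ε)) := by rw [ha2]; ring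
        _ = (ω * 2 ^ (n:ℝ)) * (4 * K ^ 2) * (δ x ^ (1 - 2 * ε) * δ x ^ (4 * ε - 2))
            * ((2:ℝ) ^ (-(4 * ε - 2)) * (6 / (2 * s - 4 * ε))) := by rw [e2]; ring
        _ = (ω * 2 ^ (n:ℝ)) * (4 * K ^ 2) * δ x ^ (2 * ε - 1)
            * ((2:ℝ) ^ (-(4 * ε - 2)) * (6 / (2 * s - 4 * ε))) := by rw [e3]
        _ ≤ (ω * 2 ^ (n:ℝ)) * (4 * K ^ 2) * δ x ^ (2 * ε - 1)
            * (4 * (6 / (2 * s - 4 * ε))) := by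
            apply mul_le_mul_of_nonneg_left _ (by positivity)
            apply mul_le_mul_of_nonneg_right h4le (by positivity)
        _ = cb * K ^ 2 * δ x ^ (2 * ε - 1) * (48 / (s - 2 * ε)) := by
            rw [hcb, show (4:ℝ) * (6 / (2 * s - 4 * ε)) = 12 / (s - 2 * ε) from by
              rw [show (4:ℝ) * (6 / (2 * s - 4 * ε)) = 24 / (2 * s - 4 * ε) from by ring,
                div_eq_div_iff (by linarith) (by linarith)]; ring]
            ring
    have hU2m : MeasurableSet {y : EuclideanSpace ℝ (Fin n) | δ x / 2 ≤ dist y x} :=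
      measurableSet_le measurable_const (measurable_id.dist measurable_const)
    have hptw : ∀ y, H1 (x, y) ≤
        (ball x (δ x / 2)).indicator (fun y => ENNReal.ofReal a1
          * ENNReal.ofReal (‖x - y‖ ^ (4 * ε - (n:ℝ)))) y
        + ({y : EuclideanSpace ℝ (Fin n) | δ x / 2 ≤ dist y x}).indicator
            (fun y => ENNReal.ofReal a2
              * ENNReal.ofReal (‖x - y‖ ^ (-((n:ℝ) + (2 * s - 4 * ε))))) y := by
      intro y
      rw [hH1, hH]
      by_cases hcond : 2 * δ y < δ x
      · simp only [hcond, if_pos]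
        exact zero_le
      simp only [hcond, if_neg, not_false_iff]
      by_cases hy : y ∈ Ω
      swap
      · simp only [show ¬(x ∈ Ω ∧ y ∈ Ω) from fun h => hy h.2, if_neg, not_false_iff]
        exact zero_le
      simp only [show x ∈ Ω ∧ y ∈ Ω from ⟨hx, hy⟩, if_pos]
      push_neg at hcond
      by_cases hclose : dist y x < δ x / 2
      · have hmem : y ∈ ball x (δ x / 2) := mem_ball.2 hclose
        calc F x y ≤ ENNReal.ofReal a1 * ENNReal.ofReal (‖x - y‖ ^ (4 * ε - (n:ℝ))) := by
              rw [ha1]; exact hnear x hx y hy hclose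
          _ = (ball x (δ x / 2)).indicator (fun y => ENNReal.ofReal a1
              * ENNReal.ofReal (‖x - y‖ ^ (4 * ε - (n:ℝ)))) y :=
              (indicator_of_mem hmem (fun y => ENNReal.ofReal a1
                * ENNReal.ofReal (‖x - y‖ ^ (4 * ε - (n:ℝ))))).symm
          _ ≤ _ := self_le_add_right _ _
      · push_neg at hclose
        have hmem : y ∈ {y : EuclideanSpace ℝ (Fin n) | δ x / 2 ≤ dist y x} := hclose
        have hmlow : δ x / 2 ≤ min (δ x) (δ y) := le_min (by linarith) (by linarith)
        have hmhigh : min (δ x) (δ y) ≤ δ x := min_le_left _ _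
        calc F x y ≤ ENNReal.ofReal (4 * K ^ 2 * min (δ x) (δ y) ^ (2 * s - 2)
                * min (δ x) (δ y) ^ (1 - 2 * ε))
              * ENNReal.ofReal (‖x - y‖ ^ (-((n:ℝ) + (2 * s - 4 * ε)))) := hfar x hx y hy
          _ ≤ ENNReal.ofReal a2
              * ENNReal.ofReal (‖x - y‖ ^ (-((n:ℝ) + (2 * s - 4 * ε)))) := by
              apply mul_le_mul_left
              apply ENNReal.ofReal_le_ofReal
              rw [ha2]
              have hb1 : min (δ x) (δ y) ^ (2 * s - 2) ≤ (δ x / 2) ^ (2 * s - 2) :=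
                Real.rpow_le_rpow_of_nonpos hd2 hmlow (by linarith)
              have hb2 : min (δ x) (δ y) ^ (1 - 2 * ε) ≤ δ x ^ (1 - 2 * ε) :=
                Real.rpow_le_rpow (le_min (hδpos x hx).le (hδpos y hy).le) hmhigh
                  (by linarith)
              have hmm : (0:ℝ) ≤ min (δ x) (δ y) ^ (2 * s - 2) :=
                Real.rpow_nonneg (le_min (hδnn x) (hδnn y)) _
              nlinarith [mul_le_mul hb1 hb2
                  (Real.rpow_nonneg (le_min (hδnn x) (hδnn y)) (1 - 2 * ε))
                  (Real.rpow_nonneg hd2.le (2 * s - 2)),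
                sq_nonneg K, mul_nonneg hmm (Real.rpow_nonneg (hδnn y) (1 - 2*ε))]
          _ = ({y : EuclideanSpace ℝ (Fin n) | δ x / 2 ≤ dist y x}).indicator
              (fun y => ENNReal.ofReal a2
                * ENNReal.ofReal (‖x - y‖ ^ (-((n:ℝ) + (2 * s - 4 * ε))))) y :=
              (indicator_of_mem hmem (fun y => ENNReal.ofReal a2
                * ENNReal.ofReal (‖x - y‖ ^ (-((n:ℝ) + (2 * s - 4 * ε)))))).symm
          _ ≤ _ := self_le_add_left _ _
    have hmeasI1 : Measurable fun y : EuclideanSpace ℝ (Fin n) =>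
        (ball x (δ x / 2)).indicator (fun y => ENNReal.ofReal a1
          * ENNReal.ofReal (‖x - y‖ ^ (4 * ε - (n:ℝ)))) y := by
      apply Measurable.indicator _ measurableSet_ball
      exact measurable_const.mul
        (((measurable_const.sub measurable_id).norm.pow measurable_const).ennreal_ofReal)
    calc (∫⁻ y, H1 (x, y))
        ≤ ∫⁻ y, ((ball x (δ x / 2)).indicator (fun y => ENNReal.ofReal a1
            * ENNReal.ofReal (‖x - y‖ ^ (4 * ε - (n:ℝ)))) y
          + ({y : EuclideanSpace ℝ (Fin n) | δ x / 2 ≤ dist y x}).indicator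
              (fun y => ENNReal.ofReal a2
                * ENNReal.ofReal (‖x - y‖ ^ (-((n:ℝ) + (2 * s - 4 * ε))))) y) :=
          lintegral_mono hptw
      _ = (∫⁻ y, (ball x (δ x / 2)).indicator (fun y => ENNReal.ofReal a1
            * ENNReal.ofReal (‖x - y‖ ^ (4 * ε - (n:ℝ)))) y)
          + ∫⁻ y, ({y : EuclideanSpace ℝ (Fin n) | δ x / 2 ≤ dist y x}).indicator
              (fun y => ENNReal.ofReal a2
                * ENNReal.ofReal (‖x - y‖ ^ (-((n:ℝ) + (2 * s - 4 * ε))))) y :=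
          lintegral_add_left hmeasI1 _
      _ = ENNReal.ofReal a1 * (∫⁻ y in ball x (δ x / 2),
            ENNReal.ofReal (‖x - y‖ ^ (4 * ε - (n:ℝ))))
          + ENNReal.ofReal a2 * ∫⁻ y in {y : EuclideanSpace ℝ (Fin n) | δ x / 2 ≤ dist y x},
              ENNReal.ofReal (‖x - y‖ ^ (-((n:ℝ) + (2 * s - 4 * ε)))) := by
          rw [lintegral_indicator measurableSet_ball, lintegral_indicator hU2m,
            lintegral_const_mul' _ _ ENNReal.ofReal_ne_top,
            lintegral_const_mul' _ _ ENNReal.ofReal_ne_top]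
      _ ≤ ENNReal.ofReal a1 * ENNReal.ofReal (ω * 2 ^ (n:ℝ) * (δ x / 2) ^ (4 * ε)
            * (6 / (4 * ε)))
          + ENNReal.ofReal a2 * ENNReal.ofReal (ω * 2 ^ (n:ℝ)
            * (δ x / 2) ^ (-(2 * s - 4 * ε)) * (6 / (2 * s - 4 * ε))) := by
          gcongr
          · exact ball_bound hn x hd2 hq0 hq2
          · exact tail_bound hn x hd2 hp0 hp2
      _ ≤ Ω.indicator W x := by
          rw [indicator_of_mem hx, hW, ← ENNReal.ofReal_mul ha10, ← ENNReal.ofReal_mul ha20,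
            ← ENNReal.ofReal_add (by positivity) (by positivity)]
          apply ENNReal.ofReal_le_ofReal
          calc a1 * (ω * 2 ^ (n:ℝ) * (δ x / 2) ^ (4 * ε) * (6 / (4 * ε)))
              + a2 * (ω * 2 ^ (n:ℝ) * (δ x / 2) ^ (-(2 * s - 4 * ε)) * (6 / (2 * s - 4 * ε)))
              ≤ cb * K ^ 2 * δ x ^ (2 * ε - 1) * (3 / ε)
                + cb * K ^ 2 * δ x ^ (2 * ε - 1) * (48 / (s - 2 * ε)) :=
                add_le_add hterm1 hterm2
            _ = cb * K ^ 2 * δ x ^ (2 * ε - 1) * (3 / ε + 48 / (s - 2 * ε)) := by ring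
  -- bound for the H2 part, after swapping
  have hT2swap : ∀ x, (∫⁻ y, H2 (y, x)) ≤ Ω.indicator W2 x := by
    intro x
    by_cases hx : x ∈ Ω
    swap
    · have hz : ∀ y, H2 (y, x) = 0 := by
        intro y
        rw [hH2, hH]
        by_cases h : 2 * δ x < δ y <;> simp [h, hx]
      simp only [hz, lintegral_zero]
      exact zero_le
    have hd := hδpos x hx
    have hUm : MeasurableSet {y : EuclideanSpace ℝ (Fin n) | δ x ≤ dist y x} :=
      measurableSet_le measurable_const (measurable_id.dist measurable_const)
    have hptw : ∀ y, H2 (y, x) ≤ ({y : EuclideanSpace ℝ (Fin n) | δ x ≤ dist y x}).indicator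
        (fun y => ENNReal.ofReal (4 * K ^ 2 * δ x ^ (2 * s - 2) * δ x ^ (1 - 2 * ε))
          * ENNReal.ofReal (‖x - y‖ ^ (-((n:ℝ) + (2 * s - 4 * ε))))) y := by
      intro y
      rw [hH2, hH]
      by_cases hcond : 2 * δ x < δ y
      swap
      · simp only [hcond, if_neg, not_false_iff]
        exact zero_le
      simp only [hcond, if_pos]
      by_cases hy : y ∈ Ω
      swap
      · simp only [show ¬(y ∈ Ω ∧ x ∈ Ω) from fun h => hy h.1, if_neg, not_false_iff]
        exact zero_le
      simp only [show y ∈ Ω ∧ x ∈ Ω from ⟨hy, hx⟩, if_pos]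
      have hdy : δ x ≤ dist y x := by
        have h' := hLip y x
        linarith
      rw [indicator_of_mem (show y ∈ {y : EuclideanSpace ℝ (Fin n) | δ x ≤ dist y x}
        from hdy)]
      calc F y x = F x y := (hFsymm x y).symm
        _ ≤ ENNReal.ofReal (4 * K ^ 2 * min (δ x) (δ y) ^ (2 * s - 2)
              * min (δ x) (δ y) ^ (1 - 2 * ε))
            * ENNReal.ofReal (‖x - y‖ ^ (-((n:ℝ) + (2 * s - 4 * ε)))) := hfar x hx y hy
        _ = ENNReal.ofReal (4 * K ^ 2 * δ x ^ (2 * s - 2) * δ x ^ (1 - 2 * ε))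
            * ENNReal.ofReal (‖x - y‖ ^ (-((n:ℝ) + (2 * s - 4 * ε)))) := by
            rw [min_eq_left (by linarith : δ x ≤ δ y)]
    calc (∫⁻ y, H2 (y, x)) ≤ ∫⁻ y, ({y : EuclideanSpace ℝ (Fin n) | δ x ≤ dist y x}).indicator
          (fun y => ENNReal.ofReal (4 * K ^ 2 * δ x ^ (2 * s - 2) * δ x ^ (1 - 2 * ε))
            * ENNReal.ofReal (‖x - y‖ ^ (-((n:ℝ) + (2 * s - 4 * ε))))) y :=
          lintegral_mono hptw
      _ = ∫⁻ y in {y : EuclideanSpace ℝ (Fin n) | δ x ≤ dist y x},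
            ENNReal.ofReal (4 * K ^ 2 * δ x ^ (2 * s - 2) * δ x ^ (1 - 2 * ε))
            * ENNReal.ofReal (‖x - y‖ ^ (-((n:ℝ) + (2 * s - 4 * ε)))) :=
          lintegral_indicator hUm _
      _ = ENNReal.ofReal (4 * K ^ 2 * δ x ^ (2 * s - 2) * δ x ^ (1 - 2 * ε))
          * ∫⁻ y in {y : EuclideanSpace ℝ (Fin n) | δ x ≤ dist y x},
            ENNReal.ofReal (‖x - y‖ ^ (-((n:ℝ) + (2 * s - 4 * ε)))) :=
          lintegral_const_mul' _ _ ENNReal.ofReal_ne_top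
      _ ≤ ENNReal.ofReal (4 * K ^ 2 * δ x ^ (2 * s - 2) * δ x ^ (1 - 2 * ε))
          * ENNReal.ofReal (ω * 2 ^ (n:ℝ) * δ x ^ (-(2 * s - 4 * ε))
              * (6 / (2 * s - 4 * ε))) := by
          gcongr
          exact tail_bound hn x hd hp0 hp2
      _ ≤ Ω.indicator W2 x := by
          rw [indicator_of_mem hx, hW2, ← ENNReal.ofReal_mul (by positivity)]
          refine ENNReal.ofReal_le_ofReal (le_of_eq ?_)
          have e : δ x ^ (2 * s - 2) * δ x ^ (1 - 2 * ε) * δ x ^ (-(2 * s - 4 * ε))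
              = δ x ^ (2 * ε - 1) := by
            rw [rpow_aux hd, rpow_aux hd]
            congr 1; ring
          calc 4 * K ^ 2 * δ x ^ (2 * s - 2) * δ x ^ (1 - 2 * ε)
                * (ω * 2 ^ (n:ℝ) * δ x ^ (-(2 * s - 4 * ε)) * (6 / (2 * s - 4 * ε)))
              = (ω * 2 ^ (n:ℝ)) * K ^ 2
                * (δ x ^ (2 * s - 2) * δ x ^ (1 - 2 * ε) * δ x ^ (-(2 * s - 4 * ε)))
                * (24 / (2 * s - 4 * ε)) := by ring
            _ = cb * K ^ 2 * δ x ^ (2 * ε - 1) * (12 / (s - 2 * ε)) := by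
                rw [e, hcb,
                  show (24:ℝ) / (2 * s - 4 * ε) = 12 / (s - 2 * ε) from by
                    rw [div_eq_div_iff (by linarith) (by linarith)]; ring]
  -- assemble
  have hmeas1 : Measurable fun x => ∫⁻ y, H1 (x, y) :=
    Measurable.lintegral_prod_right (f := fun x y => H1 (x, y)) hH1m
  calc (∫⁻ x in Ω, ∫⁻ y in Ω, F x y) = ∫⁻ x, ∫⁻ y, H (x, y) := hLHS
    _ = ∫⁻ x, ((∫⁻ y, H1 (x, y)) + ∫⁻ y, H2 (x, y)) := by
        congr 1
        ext x
        rw [show (fun y => H (x, y)) = fun y => H1 (x, y) + H2 (x, y) from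
          funext fun y => hsplit (x, y)]
        exact lintegral_add_left (hH1m.comp measurable_prodMk_left) _
    _ = (∫⁻ x, ∫⁻ y, H1 (x, y)) + ∫⁻ x, ∫⁻ y, H2 (x, y) :=
        lintegral_add_left hmeas1 _
    _ = (∫⁻ x, ∫⁻ y, H1 (x, y)) + ∫⁻ y, ∫⁻ x, H2 (x, y) := by
        congr 1
        exact lintegral_lintegral_swap (hH2m.aemeasurable)
    _ ≤ (∫⁻ x, Ω.indicator W x) + ∫⁻ x, Ω.indicator W2 x := by
        gcongr with x y
        · exact hT1 x
        · exact hT2swap y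
    _ = (∫⁻ x in Ω, W x) + ∫⁻ x in Ω, W2 x := by
        rw [lintegral_indicator hΩmes, lintegral_indicator hΩmes]
    _ ≤ ENNReal.ofReal ((60 * cb + 1) * K ^ 2 *
        (∫ x in Ω, δ x ^ (2 * ε - 1)) * (1 / ε + 1 / (s - 2 * ε))) := by
        have hWmeas : Measurable W := by
          apply Measurable.ennreal_ofReal
          exact ((hδm.pow measurable_const).const_mul (cb * K ^ 2)).mul_const _
        have hc1 : (0:ℝ) ≤ 3 / ε + 48 / (s - 2 * ε) :=
          add_nonneg (div_nonneg (by norm_num) hε0.le) (div_nonneg (by norm_num) hse.le)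
        have hc2 : (0:ℝ) ≤ 12 / (s - 2 * ε) := div_nonneg (by norm_num) hse.le
        have hcc0 : (0:ℝ) ≤ cb * K ^ 2 * (3 / ε + 60 / (s - 2 * ε)) := by
          apply mul_nonneg (mul_nonneg hcb0 (sq_nonneg K))
          exact add_nonneg (div_nonneg (by norm_num) hε0.le)
            (div_nonneg (by norm_num) hse.le)
        calc (∫⁻ x in Ω, W x) + ∫⁻ x in Ω, W2 x
            = ∫⁻ x in Ω, (W x + W2 x) := (lintegral_add_left hWmeas _).symm
          _ = ∫⁻ x in Ω, ENNReal.ofReal ((cb * K ^ 2 * (3 / ε + 60 / (s - 2 * ε)))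
                * δ x ^ (2 * ε - 1)) := by
              apply lintegral_congr
              intro x
              rw [hW, hW2, ← ENNReal.ofReal_add
                (mul_nonneg (mul_nonneg (mul_nonneg hcb0 (sq_nonneg K))
                  (Real.rpow_nonneg (hδnn x) _)) hc1)
                (mul_nonneg (mul_nonneg (mul_nonneg hcb0 (sq_nonneg K))
                  (Real.rpow_nonneg (hδnn x) _)) hc2)]
              congr 1
              ring
          _ = ENNReal.ofReal (cb * K ^ 2 * (3 / ε + 60 / (s - 2 * ε)))
              * ∫⁻ x in Ω, ENNReal.ofReal (δ x ^ (2 * ε - 1)) := by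
              rw [← lintegral_const_mul' _ _ ENNReal.ofReal_ne_top]
              apply lintegral_congr
              intro x
              rw [← ENNReal.ofReal_mul hcc0]
          _ = ENNReal.ofReal (cb * K ^ 2 * (3 / ε + 60 / (s - 2 * ε)))
              * ENNReal.ofReal (∫ x in Ω, δ x ^ (2 * ε - 1)) := by
              rw [← ofReal_integral_eq_lintegral_ofReal hInt
                (Filter.Eventually.of_forall fun x => Real.rpow_nonneg (hδnn x) _)]
          _ = ENNReal.ofReal ((cb * K ^ 2 * (3 / ε + 60 / (s - 2 * ε)))
              * ∫ x in Ω, δ x ^ (2 * ε - 1)) := (ENNReal.ofReal_mul hcc0).symm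
          _ ≤ ENNReal.ofReal ((60 * cb + 1) * K ^ 2 *
              (∫ x in Ω, δ x ^ (2 * ε - 1)) * (1 / ε + 1 / (s - 2 * ε))) := by
              apply ENNReal.ofReal_le_ofReal
              have hA0 : (0:ℝ) ≤ ∫ x in Ω, δ x ^ (2 * ε - 1) :=
                integral_nonneg fun x => Real.rpow_nonneg (hδnn x) _
              have hu : (0:ℝ) < 1 / ε := by positivity
              have hv : (0:ℝ) < 1 / (s - 2 * ε) := by positivity
              have hmain : cb * K ^ 2 * (3 / ε + 60 / (s - 2 * ε))
                  ≤ (60 * cb + 1) * K ^ 2 * (1 / ε + 1 / (s - 2 * ε)) := by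
                rw [show (3:ℝ) / ε = 3 * (1 / ε) from by ring,
                  show (60:ℝ) / (s - 2 * ε) = 60 * (1 / (s - 2 * ε)) from by ring]
                nlinarith [mul_nonneg (mul_nonneg hcb0 (sq_nonneg K)) hu.le,
                  mul_nonneg (sq_nonneg K) hu.le, mul_nonneg (sq_nonneg K) hv.le,
                  mul_nonneg (mul_nonneg hcb0 (sq_nonneg K)) hv.le]
              calc cb * K ^ 2 * (3 / ε + 60 / (s - 2 * ε)) * (∫ x in Ω, δ x ^ (2 * ε - 1))
                  ≤ (60 * cb + 1) * K ^ 2 * (1 / ε + 1 / (s - 2 * ε))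
                    * (∫ x in Ω, δ x ^ (2 * ε - 1)) :=
                    mul_le_mul_of_nonneg_right hmain hA0
                _ = (60 * cb + 1) * K ^ 2 * (∫ x in Ω, δ x ^ (2 * ε - 1))
                    * (1 / ε + 1 / (s - 2 * ε)) := by ring
end

section
/- Let n ≥ 1 and let Ω ⊂ ℝⁿ be a nonempty bounded convex open set. Then there exists a constant C > 0 such that for every β ∈ (0,1]: ∫_Ω δ(x)^{β−1} dx ≤ C/β, where δ(x) denotes the Euclidean distance from x to the complement Ωᶜ. -/
open MeasureTheory Metric Set Pointwise ENNReal

private lemma rpow_two_chord (β : ℝ) (hβ0 : 0 ≤ β) (hβ1 : β ≤ 1) :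
    (2:ℝ) ^ (-β) ≤ 1 - β / 2 := by
  have h := convexOn_exp.2 (Set.mem_univ (0:ℝ)) (Set.mem_univ (-Real.log 2))
    (by linarith : (0:ℝ) ≤ 1 - β) hβ0 (by ring)
  simp only [smul_eq_mul, mul_zero, zero_add, Real.exp_zero] at h
  have h2 : Real.exp (β * -Real.log 2) = (2:ℝ) ^ (-β) := by
    rw [Real.rpow_def_of_pos (by norm_num : (0:ℝ) < 2)]
    rw [show Real.log 2 * -β = β * -Real.log 2 by ring]
  have h3 : Real.exp (-Real.log 2) = 1/2 := by
    rw [Real.exp_neg, Real.exp_log (by norm_num : (0:ℝ) < 2)]; norm_num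
  rw [h2, h3] at h
  linarith

private lemma key_term (r β : ℝ) (hr0 : 0 < r) (hβ0 : 0 < β) (k : ℕ) :
    (r * (1/2:ℝ)^(k+1)) ^ (β-1) * ((1/2:ℝ)^k) ≤ 2 * r^(β-1) * ((2:ℝ)^(-β))^k := by
  have hpow : ∀ m : ℕ, ((1/2:ℝ))^m = (2:ℝ) ^ (-(m:ℝ)) := by
    intro m
    rw [Real.rpow_neg (by norm_num : (0:ℝ) ≤ 2), Real.rpow_natCast]
    rw [one_div, inv_pow]
  have h1 : ((1/2:ℝ)^(k+1)) ^ (β-1) = (2:ℝ) ^ (-((k:ℝ)+1) * (β-1)) := by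
    rw [hpow (k+1), ← Real.rpow_mul (by norm_num : (0:ℝ) ≤ 2)]
    push_cast
    ring_nf
  have hmul : (r * (1/2:ℝ)^(k+1)) ^ (β-1) = r ^ (β-1) * ((1/2:ℝ)^(k+1)) ^ (β-1) :=
    Real.mul_rpow hr0.le (by positivity)
  have h2 : ((2:ℝ)^(-β))^k = (2:ℝ) ^ (-β * k) := by
    rw [← Real.rpow_natCast ((2:ℝ)^(-β)) k, ← Real.rpow_mul (by norm_num : (0:ℝ) ≤ 2)]
  rw [hmul, h1, hpow k, h2]
  have hrp : 0 < r ^ (β-1) := Real.rpow_pos_of_pos hr0 _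
  have h3 : (2:ℝ) ^ (-((k:ℝ)+1) * (β-1)) * (2:ℝ) ^ (-(k:ℝ))
      = (2:ℝ) ^ (-((k:ℝ)+1)*(β-1) - k) := by
    rw [← Real.rpow_add (by norm_num : (0:ℝ) < 2)]; ring_nf
  have h4 : (2:ℝ) ^ (-((k:ℝ)+1)*(β-1) - k) ≤ (2:ℝ) ^ (1 + -β * k) := by
    apply Real.rpow_le_rpow_of_exponent_le (by norm_num)
    nlinarith [Nat.cast_nonneg (α := ℝ) k]
  have h5 : (2:ℝ) ^ (1 + -β * (k:ℝ)) = 2 * (2:ℝ) ^ (-β * k) := by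
    rw [Real.rpow_add (by norm_num : (0:ℝ) < 2), Real.rpow_one]
  calc r ^ (β-1) * (2:ℝ) ^ (-((k:ℝ)+1) * (β-1)) * (2:ℝ) ^ (-(k:ℝ))
      = r ^ (β-1) * ((2:ℝ) ^ (-((k:ℝ)+1)*(β-1)) * (2:ℝ) ^ (-(k:ℝ))) := by ring
    _ = r ^ (β-1) * (2:ℝ) ^ (-((k:ℝ)+1)*(β-1) - k) := by rw [h3]
    _ ≤ r ^ (β-1) * (2 * (2:ℝ) ^ (-β * k)) := by
        rw [← h5]; exact mul_le_mul_of_nonneg_left h4 hrp.le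
    _ = 2 * r^(β-1) * (2:ℝ) ^ (-β * (k:ℝ)) := by ring

/-- **Integrability of negative powers of the distance to the boundary.**
For a nonempty bounded convex open `Ω ⊂ ℝⁿ` there is `C > 0` such that for all `β ∈ (0,1]`,
`∫_Ω δ(x)^{β−1} dx ≤ C/β`, where `δ(x) = dist(x, Ωᶜ)`. -/
theorem stmt4 (n : ℕ) (hn : 1 ≤ n) (Ω : Set (EuclideanSpace ℝ (Fin n)))
    (hΩo : IsOpen Ω) (hΩc : Convex ℝ Ω) (hΩb : Bornology.IsBounded Ω) (hne : Ω.Nonempty) :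
    ∃ C : ℝ, 0 < C ∧ ∀ β : ℝ, β ∈ Set.Ioc (0:ℝ) 1 →
      ∫⁻ x in Ω, ENNReal.ofReal (Metric.infDist x Ωᶜ ^ (β - 1)) ≤
        ENNReal.ofReal (C / β) := by
  classical
  obtain ⟨c, hc⟩ := hne
  have hne : Ω.Nonempty := ⟨c, hc⟩
  obtain ⟨ε, hε, hball⟩ := Metric.isOpen_iff.mp hΩo c hc
  set r : ℝ := min (ε/2) (1/2) with hrdef
  have hr0 : 0 < r := lt_min (by linarith) (by norm_num)
  have hr1 : r ≤ 1 := le_trans (min_le_right _ _) (by norm_num)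
  have hrball : ball c r ⊆ Ω :=
    subset_trans (ball_subset_ball
      (by rw [hrdef]; exact le_trans (min_le_left _ _) (by linarith))) hball
  -- the complement is nonempty
  haveI : Nonempty (Fin n) := Fin.pos_iff_nonempty.mp hn
  obtain ⟨M, hM⟩ := hΩb.subset_ball c
  have hcompl : Ωᶜ.Nonempty := by
    obtain ⟨u, hu⟩ := exists_ne (0 : EuclideanSpace ℝ (Fin n))
    have hun : 0 < ‖u‖ := norm_pos_iff.mpr hu
    refine ⟨c + ((|M|+1)/‖u‖) • u, fun hmem => ?_⟩
    have h := hM hmem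
    rw [mem_ball, dist_comm, dist_self_add_right, norm_smul, Real.norm_eq_abs, abs_div,
      abs_of_nonneg (by positivity : (0:ℝ) ≤ |M|+1), abs_norm, div_mul_cancel₀ _ hun.ne'] at h
    have := le_abs_self M
    linarith
  set δ : EuclideanSpace ℝ (Fin n) → ℝ := fun x => infDist x Ωᶜ with hδdef
  have hδball : ∀ x s, ball x s ⊆ Ω → s ≤ δ x := by
    intro x s hsub
    by_contra h
    push_neg at h
    obtain ⟨y, hy, hdy⟩ := (infDist_lt_iff hcompl).mp h
    exact hy (hsub (mem_ball'.mpr hdy))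
  -- key geometric fact: homothety images are deep inside Ω
  have hhom : ∀ θ : ℝ, 0 ≤ θ → θ < 1 → ∀ z ∈ Ω, (1-θ)*r ≤ δ (c + θ • (z - c)) := by
    intro θ hθ0 hθ1 z hz
    apply hδball
    intro y hy
    have hne1 : (1:ℝ) - θ ≠ 0 := by linarith
    have hθpos : (0:ℝ) < 1 - θ := by linarith
    set w := c + (1-θ)⁻¹ • (y - (c + θ • (z - c))) with hwdef
    have hwball : w ∈ ball c r := by
      rw [hwdef, mem_ball, dist_comm, dist_self_add_right, norm_smul, Real.norm_eq_abs,
        abs_of_pos (inv_pos.mpr hθpos)]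
      have hyd : ‖y - (c + θ • (z - c))‖ < (1-θ)*r := by
        rw [← dist_eq_norm]; exact mem_ball.mp hy
      calc (1-θ)⁻¹ * ‖y - (c + θ • (z - c))‖ < (1-θ)⁻¹ * ((1-θ)*r) :=
            mul_lt_mul_of_pos_left hyd (inv_pos.mpr hθpos)
        _ = r := by field_simp
    have hcomb : θ • z + (1-θ) • w ∈ Ω := hΩc hz (hrball hwball) hθ0 hθpos.le (by ring)
    have hkey : θ • z + (1-θ) • w = y := by
      rw [hwdef, smul_add, smul_smul, mul_inv_cancel₀ hne1, one_smul]
      module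
    rw [hkey] at hcomb
    exact hcomb
  have Vlt : volume Ω < ⊤ := hΩb.measure_lt_top
  have hδcont : Continuous δ := by rw [hδdef]; exact continuous_infDist_pt Ωᶜ
  -- distribution estimate for the measure of the thin boundary layer
  have hdist : ∀ s : ℝ, 0 < s → s ≤ r →
      volume {x ∈ Ω | δ x < s} ≤ ENNReal.ofReal ((n:ℝ) * (s / r)) * volume Ω := by
    intro s hs hsr
    set θ : ℝ := 1 - s / r with hθdef
    have hsr1 : s / r ≤ 1 := (div_le_one hr0).mpr hsr
    have hsr0 : 0 < s / r := div_pos hs hr0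
    have hθ0 : 0 ≤ θ := by rw [hθdef]; linarith
    have hθ1 : θ < 1 := by rw [hθdef]; linarith
    set T' : Set _ := Ω ∩ {x | s ≤ δ x} with hT'def
    have hT'meas : MeasurableSet T' :=
      hΩo.measurableSet.inter (measurableSet_le measurable_const hδcont.measurable)
    have hsub2 : (fun z => c + θ • (z - c)) '' Ω ⊆ T' := by
      rintro x ⟨z, hz, rfl⟩
      constructor
      · have h := hΩc hz hc hθ0 (by linarith : (0:ℝ) ≤ 1 - θ) (by ring)
        have heq : θ • z + (1-θ) • c = c + θ • (z - c) := by module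
        rwa [heq] at h
      · have h := hhom θ hθ0 hθ1 z hz
        have he : (1-θ)*r = s := by rw [hθdef]; field_simp; ring
        rw [he] at h
        exact h
    have himg : volume ((fun z => c + θ • (z - c)) '' Ω)
        = ENNReal.ofReal (θ ^ n) * volume Ω := by
      have himg2 : (fun z : EuclideanSpace ℝ (Fin n) => c + θ • (z - c)) '' Ω
          = (c - θ • c) +ᵥ (θ • Ω) := by
        ext y
        simp only [Set.mem_image, Set.mem_vadd_set, Set.mem_smul_set, vadd_eq_add]
        constructor
        · rintro ⟨z, hz, rfl⟩; exact ⟨θ • z, ⟨z, hz, rfl⟩, by module⟩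
        · rintro ⟨_, ⟨z, hz, rfl⟩, rfl⟩; exact ⟨z, hz, by module⟩
      rw [himg2, measure_vadd, Measure.addHaar_smul_of_nonneg volume hθ0,
        finrank_euclideanSpace_fin]
    have hsub1 : {x ∈ Ω | δ x < s} ⊆ Ω \ T' := by
      rintro x ⟨hx1, hx2⟩
      exact ⟨hx1, fun hT => absurd hx2 (not_lt.mpr hT.2)⟩
    have hbern : (1:ℝ) ≤ (n:ℝ) * (s/r) + θ^n := by
      have hb := one_add_mul_le_pow (by linarith : (-2:ℝ) ≤ θ - 1) n
      rw [show (1:ℝ) + (θ-1) = θ by ring] at hb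
      have hθ1' : θ - 1 = -(s/r) := by rw [hθdef]; ring
      rw [hθ1'] at hb
      linarith
    calc volume {x ∈ Ω | δ x < s} ≤ volume (Ω \ T') := measure_mono hsub1
      _ = volume Ω - volume T' := measure_diff inter_subset_left hT'meas.nullMeasurableSet
          (ne_of_lt (lt_of_le_of_lt (measure_mono inter_subset_left) Vlt))
      _ ≤ volume Ω - ENNReal.ofReal (θ^n) * volume Ω := by
          apply tsub_le_tsub_left
          rw [← himg]; exact measure_mono hsub2
      _ ≤ ENNReal.ofReal ((n:ℝ) * (s/r)) * volume Ω := by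
          rw [tsub_le_iff_right, ← add_mul, ← ENNReal.ofReal_add (by positivity) (by positivity)]
          calc volume Ω = 1 * volume Ω := (one_mul _).symm
            _ ≤ ENNReal.ofReal ((n:ℝ)*(s/r) + θ^n) * volume Ω := by
                apply mul_le_mul_left
                rw [show (1:ℝ≥0∞) = ENNReal.ofReal 1 by simp]
                exact ENNReal.ofReal_le_ofReal hbern
  -- volume of Ω
  have Vpos : 0 < volume Ω := hΩo.measure_pos volume hne
  set Vr : ℝ := (volume Ω).toReal with hVrdef
  have hVr : 0 < Vr := ENNReal.toReal_pos Vpos.ne' Vlt.ne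
  have hVeq : volume Ω = ENNReal.ofReal Vr := (ENNReal.ofReal_toReal Vlt.ne).symm
  -- dyadic shells
  set A : ℕ → Set (EuclideanSpace ℝ (Fin n)) := fun k =>
    (Ω ∩ {x | r * (1/2:ℝ)^(k+1) ≤ δ x}) ∩ {x | k = 0 ∨ δ x < r * (1/2:ℝ)^k} with hAdef
  have hcover : Ω ⊆ ⋃ k, A k := by
    intro x hx
    have hδx : 0 < δ x := by
      obtain ⟨ε', hε', hb⟩ := Metric.isOpen_iff.mp hΩo x hx
      exact lt_of_lt_of_le hε' (hδball x ε' hb)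
    have hP : ∃ m : ℕ, r * (1/2:ℝ)^(m+1) ≤ δ x := by
      obtain ⟨m, hm⟩ := exists_pow_lt_of_lt_one (div_pos hδx hr0) (by norm_num : (1/2:ℝ) < 1)
      refine ⟨m, ?_⟩
      have h1 : ((1/2:ℝ))^(m+1) ≤ (1/2:ℝ)^m :=
        pow_le_pow_of_le_one (by norm_num) (by norm_num) (Nat.le_succ m)
      have h2 : r * (1/2:ℝ)^m ≤ δ x := by
        rw [lt_div_iff₀ hr0] at hm
        nlinarith
      nlinarith
    set k := Nat.find hP with hkdef
    have hk : r * (1/2:ℝ)^(k+1) ≤ δ x := Nat.find_spec hP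
    refine Set.mem_iUnion.mpr ⟨k, ⟨hx, hk⟩, ?_⟩
    rcases Nat.eq_zero_or_pos k with h0 | hpos
    · exact Or.inl h0
    · refine Or.inr ?_
      obtain ⟨m, hm⟩ := Nat.exists_eq_succ_of_ne_zero hpos.ne'
      have hmin := Nat.find_min hP (by omega : m < k)
      push_neg at hmin
      rw [hm]
      exact hmin
  have hApt : ∀ k, ∀ x ∈ A k, r * (1/2:ℝ)^(k+1) ≤ δ x := fun k x hx => hx.1.2
  have hAmeasure : ∀ k, volume (A k) ≤ ENNReal.ofReal ((n:ℝ) * (1/2:ℝ)^k) * volume Ω := by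
    intro k
    cases k with
    | zero =>
      calc volume (A 0) ≤ volume Ω := measure_mono (fun x hx => hx.1.1)
        _ = 1 * volume Ω := (one_mul _).symm
        _ ≤ ENNReal.ofReal ((n:ℝ) * (1/2:ℝ)^(0:ℕ)) * volume Ω := by
            apply mul_le_mul_left
            rw [show (1:ℝ≥0∞) = ENNReal.ofReal 1 by simp]
            apply ENNReal.ofReal_le_ofReal
            simp only [pow_zero, mul_one]
            exact_mod_cast hn
    | succ m =>
      have hsub : A (m+1) ⊆ {x ∈ Ω | δ x < r * (1/2:ℝ)^(m+1)} := by
        rintro x ⟨⟨hx1, _⟩, hx3⟩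
        rcases hx3 with h | h
        · exact absurd h (Nat.succ_ne_zero m)
        · exact ⟨hx1, h⟩
      have hsle : r * (1/2:ℝ)^(m+1) ≤ r := by
        have : ((1/2:ℝ))^(m+1) ≤ 1 := pow_le_one₀ (by norm_num) (by norm_num)
        nlinarith
      calc volume (A (m+1)) ≤ volume {x ∈ Ω | δ x < r * (1/2:ℝ)^(m+1)} := measure_mono hsub
        _ ≤ ENNReal.ofReal ((n:ℝ) * ((r * (1/2:ℝ)^(m+1)) / r)) * volume Ω :=
            hdist _ (by positivity) hsle
        _ = ENNReal.ofReal ((n:ℝ) * (1/2:ℝ)^(m+1)) * volume Ω := by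
            rw [mul_comm r _, mul_div_assoc, div_self hr0.ne', mul_one]
  -- the constant
  refine ⟨4 * n * Vr / r, by positivity, ?_⟩
  rintro β ⟨hβ0, hβ1⟩
  set q : ℝ≥0∞ := ENNReal.ofReal ((2:ℝ)^(-β)) with hqdef
  have hq2 : (0:ℝ) ≤ (2:ℝ)^(-β) := Real.rpow_nonneg (by norm_num) _
  -- per-shell integral bound
  have hint : ∀ k, (∫⁻ x in A k, ENNReal.ofReal (δ x ^ (β-1))) ≤
      ENNReal.ofReal ((r * (1/2:ℝ)^(k+1)) ^ (β-1)) * volume (A k) := by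
    intro k
    rw [← setLIntegral_const]
    apply setLIntegral_mono measurable_const
    intro x hx
    apply ENNReal.ofReal_le_ofReal
    exact Real.rpow_le_rpow_of_nonpos (by positivity) (hApt k x hx) (by linarith)
  have hterm : ∀ k, ENNReal.ofReal ((r * (1/2:ℝ)^(k+1)) ^ (β-1)) *
      (ENNReal.ofReal ((n:ℝ) * (1/2:ℝ)^k) * volume Ω) ≤
      ENNReal.ofReal ((n:ℝ) * (2 * r^(β-1))) * q^k * volume Ω := by
    intro k
    rw [← mul_assoc, ← ENNReal.ofReal_mul (by positivity), hqdef,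
      ← ENNReal.ofReal_pow hq2, ← ENNReal.ofReal_mul (by positivity)]
    apply mul_le_mul_left
    apply ENNReal.ofReal_le_ofReal
    have hkt := key_term r β hr0 hβ0 k
    have hn0 : (0:ℝ) ≤ (n:ℝ) := Nat.cast_nonneg n
    calc (r * (1/2:ℝ)^(k+1)) ^ (β-1) * ((n:ℝ) * (1/2:ℝ)^k)
        = (n:ℝ) * ((r * (1/2:ℝ)^(k+1)) ^ (β-1) * (1/2:ℝ)^k) := by ring
      _ ≤ (n:ℝ) * (2 * r^(β-1) * ((2:ℝ)^(-β))^k) := mul_le_mul_of_nonneg_left hkt hn0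
      _ = (n:ℝ) * (2 * r^(β-1)) * ((2:ℝ)^(-β))^k := by ring
  -- geometric series bound
  have hgeo : (∑' k : ℕ, q^k) ≤ ENNReal.ofReal (2/β) := by
    rw [ENNReal.tsum_geometric]
    have h1 : ENNReal.ofReal (β/2) ≤ 1 - q := by
      rw [hqdef, show (1:ℝ≥0∞) = ENNReal.ofReal 1 by simp, ← ENNReal.ofReal_sub _ hq2]
      apply ENNReal.ofReal_le_ofReal
      have := rpow_two_chord β hβ0.le hβ1
      linarith
    calc (1 - q)⁻¹ ≤ (ENNReal.ofReal (β/2))⁻¹ := ENNReal.inv_le_inv' h1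
      _ = ENNReal.ofReal ((β/2)⁻¹) := (ENNReal.ofReal_inv_of_pos (by positivity)).symm
      _ = ENNReal.ofReal (2/β) := by rw [inv_div]
  -- main computation
  calc ∫⁻ x in Ω, ENNReal.ofReal (δ x ^ (β-1))
      ≤ ∫⁻ x in ⋃ k, A k, ENNReal.ofReal (δ x ^ (β-1)) := lintegral_mono_set hcover
    _ ≤ ∑' k, ∫⁻ x in A k, ENNReal.ofReal (δ x ^ (β-1)) := lintegral_iUnion_le _ _
    _ ≤ ∑' k, ENNReal.ofReal ((n:ℝ) * (2 * r^(β-1))) * q^k * volume Ω :=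
        ENNReal.tsum_le_tsum (fun k => le_trans (le_trans (hint k)
          (mul_le_mul_right (hAmeasure k) _)) (hterm k))
    _ = ENNReal.ofReal ((n:ℝ) * (2 * r^(β-1))) * (∑' k : ℕ, q^k) * volume Ω := by
        rw [ENNReal.tsum_mul_right, ENNReal.tsum_mul_left]
    _ ≤ ENNReal.ofReal ((n:ℝ) * (2 * r^(β-1))) * ENNReal.ofReal (2/β) * volume Ω := by
        apply mul_le_mul_left
        exact mul_le_mul_right hgeo _
    _ = ENNReal.ofReal ((n:ℝ) * (2 * r^(β-1)) * (2/β) * Vr) := by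
        rw [hVeq, ← ENNReal.ofReal_mul (by positivity), ← ENNReal.ofReal_mul (by positivity)]
    _ ≤ ENNReal.ofReal (4 * n * Vr / r / β) := by
        apply ENNReal.ofReal_le_ofReal
        have h1 : r ^ β ≤ 1 := Real.rpow_le_one hr0.le hr1 hβ0.le
        have hrp : r^(β-1) ≤ 1/r := by
          rw [Real.rpow_sub hr0, Real.rpow_one]
          gcongr
        have hn0 : (0:ℝ) ≤ (n:ℝ) := Nat.cast_nonneg n
        calc (n:ℝ) * (2 * r^(β-1)) * (2/β) * Vr = 4*(n:ℝ)*Vr*r^(β-1)/β := by ring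
          _ ≤ 4*(n:ℝ)*Vr*(1/r)/β := by gcongr
          _ = 4*(n:ℝ)*Vr/r/β := by ring
end

section
/- Let n ≥ 1, s ∈ (0,1), N ∈ ℕ, Λ ≥ 0 and R > 0. Let T, S ⊂ ℝⁿ be measurable sets with T of finite Lebesgue measure and ‖x − y‖ ≤ R for all x ∈ T and y ∈ S. Let φ₁, …, φ_N : ℝⁿ → ℝ be Λ-Lipschitz functions and c₁, …, c_N ∈ ℝ. Then ∬_{T×S} ( Σ_{i=1}^N c_i (φ_i(x) − φ_i(y)) )² ‖x − y‖^{−(n+2s)} dy dx ≤ N · Λ² · ( Σ_{i=1}^N c_i² ) · ω_{n−1} · |T| · R^{2−2s} / (2 − 2s). -/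
open MeasureTheory Metric Set

private lemma polar_lintegral {n : ℕ} (hn : 1 ≤ n) (g : ℝ → ENNReal) (hg : Measurable g) :
    ∫⁻ x : EuclideanSpace ℝ (Fin n), g ‖x‖ =
      (n : ENNReal) * volume (ball (0 : EuclideanSpace ℝ (Fin n)) 1) *
        ∫⁻ r in Set.Ioi (0 : ℝ), ENNReal.ofReal (r ^ (n - 1)) * g r := by
  haveI : NeZero n := ⟨by omega⟩
  set E := EuclideanSpace ℝ (Fin n) with hE
  have hdim : Module.finrank ℝ E = n := finrank_euclideanSpace_fin
  calc ∫⁻ x : E, g ‖x‖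
      = ∫⁻ x in ({0}ᶜ : Set E), g ‖x‖ := by
        rw [MeasureTheory.restrict_compl_singleton]
    _ = ∫⁻ x : (({0}ᶜ : Set E)), g ‖(x : E)‖ ∂((volume : Measure E).comap Subtype.val) :=
        (lintegral_subtype_comap (measurableSet_singleton (0:E)).compl _).symm
    _ = ∫⁻ p : sphere (0:E) 1 × Set.Ioi (0:ℝ), g p.2
          ∂((volume : Measure E).toSphere.prod
              (MeasureTheory.Measure.volumeIoiPow (Module.finrank ℝ E - 1))) := by
        have h := ((volume : Measure E).measurePreserving_homeomorphUnitSphereProd).lintegral_comp_emb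
          (Homeomorph.measurableEmbedding _) (fun p => g p.2)
        rw [← h]; simp only [homeomorphUnitSphereProd_apply_snd_coe]
    _ = (volume : Measure E).toSphere Set.univ *
          ∫⁻ r : Set.Ioi (0:ℝ), g r
            ∂(MeasureTheory.Measure.volumeIoiPow (Module.finrank ℝ E - 1)) := by
        have h := lintegral_prod_mul (μ := (volume : Measure E).toSphere)
          (ν := MeasureTheory.Measure.volumeIoiPow (Module.finrank ℝ E - 1))
          (f := fun _ : sphere (0:E) 1 => (1 : ENNReal))
          (g := fun r : Set.Ioi (0:ℝ) => g r)
          measurable_const.aemeasurable (hg.comp measurable_subtype_coe).aemeasurable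
        simp only [one_mul, lintegral_one] at h
        exact h
    _ = (n : ENNReal) * volume (ball (0 : E) 1) *
          ∫⁻ r in Set.Ioi (0 : ℝ), ENNReal.ofReal (r ^ (n - 1)) * g r := by
        rw [Measure.toSphere_apply_univ, hdim]
        congr 1
        have h := lintegral_withDensity_eq_lintegral_mul
          (MeasureTheory.Measure.comap Subtype.val (volume : Measure ℝ))
          (f := fun r : Set.Ioi (0:ℝ) => ENNReal.ofReal (r.1 ^ (Module.finrank ℝ E - 1)))
          ((measurable_subtype_coe.pow_const _).ennreal_ofReal)
          (g := fun r : Set.Ioi (0:ℝ) => g r) (hg.comp measurable_subtype_coe)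
        rw [MeasureTheory.Measure.volumeIoiPow]
        rw [show (fun r : Set.Ioi (0:ℝ) => ENNReal.ofReal (r.1 ^ (Module.finrank ℝ E - 1)))
            = fun r : Set.Ioi (0:ℝ) => ENNReal.ofReal (r.1 ^ (n - 1)) by rw [hdim]] at h
        rw [h, ← lintegral_subtype_comap measurableSet_Ioi
          (fun r => ENNReal.ofReal (r ^ (n - 1)) * g r)]
        rfl

private lemma lintegral_ball_rpow {n : ℕ} (hn : 1 ≤ n) {p : ℝ} (hp : 0 < (n:ℝ) + p)
    {R : ℝ} (hR : 0 < R) :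
    ∫⁻ y in closedBall (0 : EuclideanSpace ℝ (Fin n)) R, ENNReal.ofReal (‖y‖ ^ p) =
      (n : ENNReal) * volume (ball (0 : EuclideanSpace ℝ (Fin n)) 1) *
        ENNReal.ofReal (R ^ ((n:ℝ) + p) / ((n:ℝ) + p)) := by
  set E := EuclideanSpace ℝ (Fin n) with hE
  set g : ℝ → ENNReal := (Set.Iic R).indicator (fun r => ENNReal.ofReal (r ^ p)) with hgdef
  have hg : Measurable g := by
    apply Measurable.indicator _ measurableSet_Iic
    measurability
  have key : ∀ y : E,
      (closedBall (0:E) R).indicator (fun y => ENNReal.ofReal (‖y‖ ^ p)) y = g ‖y‖ := by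
    intro y
    by_cases h : y ∈ closedBall (0:E) R
    · rw [Set.indicator_of_mem h, hgdef, Set.indicator_of_mem
        (show ‖y‖ ∈ Set.Iic R from mem_closedBall_zero_iff.mp h)]
    · rw [Set.indicator_of_notMem h, hgdef, Set.indicator_of_notMem
        (show ‖y‖ ∉ Set.Iic R from fun hc => h (mem_closedBall_zero_iff.mpr hc))]
  have hq : (-1 : ℝ) < (n:ℝ) - 1 + p := by linarith
  calc ∫⁻ y in closedBall (0 : E) R, ENNReal.ofReal (‖y‖ ^ p)
      = ∫⁻ y : E, (closedBall (0:E) R).indicator (fun y => ENNReal.ofReal (‖y‖ ^ p)) y := by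
        rw [lintegral_indicator measurableSet_closedBall]
    _ = ∫⁻ y : E, g ‖y‖ := by simp_rw [key]
    _ = (n : ENNReal) * volume (ball (0 : E) 1) *
          ∫⁻ r in Set.Ioi (0 : ℝ), ENNReal.ofReal (r ^ (n - 1)) * g r :=
        polar_lintegral hn g hg
    _ = (n : ENNReal) * volume (ball (0 : E) 1) *
          ENNReal.ofReal (R ^ ((n:ℝ) + p) / ((n:ℝ) + p)) := by
        congr 1
        calc ∫⁻ r in Set.Ioi (0 : ℝ), ENNReal.ofReal (r ^ (n - 1)) * g r
            = ∫⁻ r in Set.Ioi (0 : ℝ),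
                (Set.Iic R).indicator
                  (fun r => ENNReal.ofReal (r ^ (n - 1)) * ENNReal.ofReal (r ^ p)) r := by
              apply lintegral_congr
              intro r
              by_cases h : r ∈ Set.Iic R
              · simp [hgdef, Set.indicator_of_mem h]
              · simp [hgdef, Set.indicator_of_notMem h]
          _ = ∫⁻ r in Set.Ioc (0:ℝ) R,
                ENNReal.ofReal (r ^ (n - 1)) * ENNReal.ofReal (r ^ p) := by
              rw [lintegral_indicator measurableSet_Iic, Measure.restrict_restrict
                measurableSet_Iic, Set.inter_comm, Set.Ioi_inter_Iic]
          _ = ∫⁻ r in Set.Ioc (0:ℝ) R, ENNReal.ofReal (r ^ ((n:ℝ) - 1 + p)) := by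
              apply setLIntegral_congr_fun measurableSet_Ioc
              intro r hr
              beta_reduce
              rw [← ENNReal.ofReal_mul (pow_nonneg hr.1.le _)]
              congr 1
              rw [← Real.rpow_natCast r (n - 1), ← Real.rpow_add hr.1]
              congr 1
              push_cast [Nat.cast_sub hn]
              ring
          _ = ENNReal.ofReal (∫ r in Set.Ioc (0:ℝ) R, r ^ ((n:ℝ) - 1 + p)) := by
              rw [← ofReal_integral_eq_lintegral_ofReal (intervalIntegral.intervalIntegrable_rpow' hq).1]
              filter_upwards [ae_restrict_mem measurableSet_Ioc] with r hr
              exact Real.rpow_nonneg hr.1.le _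
          _ = ENNReal.ofReal (R ^ ((n:ℝ) + p) / ((n:ℝ) + p)) := by
              rw [← intervalIntegral.integral_of_le hR.le, integral_rpow (Or.inl hq)]
              congr 1
              rw [Real.zero_rpow (by linarith : (n:ℝ) - 1 + p + 1 ≠ 0)]
              have h1 : (n:ℝ) - 1 + p + 1 = (n:ℝ) + p := by ring
              rw [h1]
              ring

/-- **Core estimate of Proposition 4.2 (local stability of `I_h`).**
Let `n ≥ 1`, `s ∈ (0,1)`, `N ∈ ℕ`, `Λ ≥ 0`, `R > 0`. Let `T, S ⊂ ℝⁿ` be measurable with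
`|T| < ∞` and `‖x−y‖ ≤ R` for all `x ∈ T`, `y ∈ S`. If `φ₁,…,φ_N` are `Λ`-Lipschitz and
`c₁,…,c_N ∈ ℝ`, then
`∬_{T×S} (Σᵢ cᵢ (φᵢ(x)−φᵢ(y)))² ‖x−y‖^{−(n+2s)} dy dx
  ≤ N Λ² (Σᵢ cᵢ²) ω_{n−1} |T| R^{2−2s}/(2−2s)`, where `ω_{n−1} = n·vol(B₁)`. -/
theorem stmt8 (n : ℕ) (hn : 1 ≤ n) (s : ℝ) (hs : s ∈ Set.Ioo (0:ℝ) 1) (N : ℕ)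
    (Λ R : ℝ) (hΛ : 0 ≤ Λ) (hR : 0 < R)
    (T S : Set (EuclideanSpace ℝ (Fin n))) (hT : MeasurableSet T) (hS : MeasurableSet S)
    (hTfin : volume T < ⊤)
    (hTS : ∀ x ∈ T, ∀ y ∈ S, ‖x - y‖ ≤ R)
    (φ : Fin N → EuclideanSpace ℝ (Fin n) → ℝ)
    (hφ : ∀ i, ∀ x y : EuclideanSpace ℝ (Fin n), |φ i x - φ i y| ≤ Λ * ‖x - y‖)
    (c : Fin N → ℝ) :
    (∫⁻ x in T, ∫⁻ y in S,
        ENNReal.ofReal ((∑ i, c i * (φ i x - φ i y)) ^ 2 * ‖x - y‖ ^ (-((n : ℝ) + 2 * s)))) ≤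
      ENNReal.ofReal ((N : ℝ) * Λ ^ 2 * (∑ i, c i ^ 2) *
        (n * (volume (Metric.ball (0 : EuclideanSpace ℝ (Fin n)) 1)).toReal) *
        (volume T).toReal * R ^ (2 - 2 * s) / (2 - 2 * s)) := by
  set K : ℝ := (N : ℝ) * Λ ^ 2 * ∑ i, c i ^ 2 with hKdef
  have hK0 : 0 ≤ K := by positivity
  set p : ℝ := 2 - ((n : ℝ) + 2 * s) with hpdef
  have hnp : (n : ℝ) + p = 2 - 2 * s := by rw [hpdef]; ring
  have hnp0 : 0 < (n : ℝ) + p := by rw [hnp]; linarith [hs.2]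
  -- pointwise bound
  have point : ∀ x y : EuclideanSpace ℝ (Fin n),
      ENNReal.ofReal ((∑ i, c i * (φ i x - φ i y)) ^ 2 * ‖x - y‖ ^ (-((n : ℝ) + 2 * s))) ≤
        ENNReal.ofReal (K * ‖x - y‖ ^ p) := by
    intro x y
    rcases eq_or_ne x y with rfl | hxy
    · have h0 : (∑ i, c i * (φ i x - φ i x)) = 0 := by simp
      rw [h0]
      simpa using zero_le _
    · have ha : 0 < ‖x - y‖ := by rwa [norm_pos_iff, sub_ne_zero]
      apply ENNReal.ofReal_le_ofReal
      have h1 : (∑ i, c i * (φ i x - φ i y)) ^ 2 ≤ K * ‖x - y‖ ^ (2:ℕ) := by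
        calc (∑ i, c i * (φ i x - φ i y)) ^ 2
            ≤ (∑ i, (c i) ^ 2) * ∑ i, (φ i x - φ i y) ^ 2 :=
              Finset.sum_mul_sq_le_sq_mul_sq _ _ _
          _ ≤ (∑ i, (c i) ^ 2) * ∑ _i : Fin N, (Λ * ‖x - y‖) ^ 2 := by
              refine mul_le_mul_of_nonneg_left (Finset.sum_le_sum fun i _ => ?_) (by positivity)
              calc (φ i x - φ i y) ^ 2 = |φ i x - φ i y| ^ 2 := (sq_abs _).symm
                _ ≤ (Λ * ‖x - y‖) ^ 2 := pow_le_pow_left₀ (abs_nonneg _) (hφ i x y) 2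
          _ = K * ‖x - y‖ ^ (2:ℕ) := by
              rw [Finset.sum_const, Finset.card_univ, Fintype.card_fin, hKdef]
              push_cast
              ring
      calc (∑ i, c i * (φ i x - φ i y)) ^ 2 * ‖x - y‖ ^ (-((n : ℝ) + 2 * s))
          ≤ (K * ‖x - y‖ ^ (2:ℕ)) * ‖x - y‖ ^ (-((n : ℝ) + 2 * s)) :=
            mul_le_mul_of_nonneg_right h1 (Real.rpow_nonneg ha.le _)
        _ = K * ‖x - y‖ ^ p := by
            rw [mul_assoc]
            congr 1
            rw [← Real.rpow_natCast ‖x - y‖ 2, ← Real.rpow_add ha]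
            have hexp : ((2:ℕ):ℝ) + -((n:ℝ) + 2*s) = p := by push_cast [hpdef]; ring
            rw [hexp]
  set C : ENNReal := ENNReal.ofReal K * ((n : ENNReal) * volume (ball (0 : EuclideanSpace ℝ (Fin n)) 1) *
    ENNReal.ofReal (R ^ ((n:ℝ) + p) / ((n:ℝ) + p))) with hCdef
  -- inner bound
  have inner : ∀ x ∈ T, (∫⁻ y in S,
      ENNReal.ofReal ((∑ i, c i * (φ i x - φ i y)) ^ 2 * ‖x - y‖ ^ (-((n : ℝ) + 2 * s)))) ≤ C := by
    intro x hx
    calc (∫⁻ y in S,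
        ENNReal.ofReal ((∑ i, c i * (φ i x - φ i y)) ^ 2 * ‖x - y‖ ^ (-((n : ℝ) + 2 * s))))
        ≤ ∫⁻ y in S, ENNReal.ofReal (K * ‖x - y‖ ^ p) := lintegral_mono (fun y => point x y)
      _ ≤ ∫⁻ y in (fun y : EuclideanSpace ℝ (Fin n) => x - y) ⁻¹' (closedBall (0 : EuclideanSpace ℝ (Fin n)) R),
            ENNReal.ofReal (K * ‖x - y‖ ^ p) := by
          apply lintegral_mono_set
          intro y hy
          simp only [Set.mem_preimage, mem_closedBall_zero_iff]
          exact hTS x hx y hy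
      _ = ∫⁻ z in closedBall (0 : EuclideanSpace ℝ (Fin n)) R, ENNReal.ofReal (K * ‖z‖ ^ p) :=
          (Measure.measurePreserving_sub_left volume x).setLIntegral_comp_preimage_emb
            (MeasurableEquiv.subLeft x).measurableEmbedding
            (fun z => ENNReal.ofReal (K * ‖z‖ ^ p)) (closedBall (0 : EuclideanSpace ℝ (Fin n)) R)
      _ = ENNReal.ofReal K * ∫⁻ z in closedBall (0 : EuclideanSpace ℝ (Fin n)) R, ENNReal.ofReal (‖z‖ ^ p) := by
          simp_rw [ENNReal.ofReal_mul hK0]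
          exact lintegral_const_mul' _ _ ENNReal.ofReal_ne_top
      _ = C := by rw [lintegral_ball_rpow hn hnp0 hR]
  calc (∫⁻ x in T, ∫⁻ y in S,
        ENNReal.ofReal ((∑ i, c i * (φ i x - φ i y)) ^ 2 * ‖x - y‖ ^ (-((n : ℝ) + 2 * s))))
      ≤ ∫⁻ _x in T, C := setLIntegral_mono measurable_const inner
    _ = C * volume T := setLIntegral_const T C
    _ = ENNReal.ofReal ((N : ℝ) * Λ ^ 2 * (∑ i, c i ^ 2) *
        (n * (volume (Metric.ball (0 : EuclideanSpace ℝ (Fin n)) 1)).toReal) *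
        (volume T).toReal * R ^ (2 - 2 * s) / (2 - 2 * s)) := by
        rw [hCdef, ← hnp]
        have hB : (volume (ball (0 : EuclideanSpace ℝ (Fin n)) 1)) = ENNReal.ofReal
            ((volume (ball (0 : EuclideanSpace ℝ (Fin n)) 1)).toReal) :=
          (ENNReal.ofReal_toReal measure_ball_lt_top.ne).symm
        have hT' : volume T = ENNReal.ofReal ((volume T).toReal) :=
          (ENNReal.ofReal_toReal hTfin.ne).symm
        rw [hB, hT', ← ENNReal.ofReal_natCast n]
        rw [← ENNReal.ofReal_mul (by positivity), ← ENNReal.ofReal_mul (by positivity),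
          ← ENNReal.ofReal_mul (by positivity), ← ENNReal.ofReal_mul (by positivity)]
        congr 1
        have hs2 : (0:ℝ) < (n:ℝ) + p := hnp0
        field_simp
        rw [ENNReal.toReal_ofReal ENNReal.toReal_nonneg, ENNReal.toReal_ofReal ENNReal.toReal_nonneg, hKdef]
end
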